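/- arXiv:2311.12335 — 4 statements merged into one kernel-verified Lean document; each statement's English description precedes it below -/
import Mathlib

section
/- Let n, c, s, p and n₁, …, n_c be positive integers with n₁ ≥ 2p, n₁ ≥ n₂ ≥ ⋯ ≥ n_c ≥ p and n₁ + n₂ + ⋯ + n_c = n − s. Then λ₁(D(K_s ∨ (K_{n₁} + K_{n₂} + ⋯ + K_{n_c}))) ≥ λ₁(D(K_s ∨ (K_{n−s−p(c−1)} + (c−1)K_p))), with equality if and only if (n₁, n₂, …, n_c) = (n−s−p(c−1), p, …, p). -/
open SimpleGraph Finset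

/-- The distance matrix of a graph: the `(i,j)` entry is the graph distance from `i` to `j`. -/
noncomputable def distMatrix {V : Type*} [Fintype V] (G : SimpleGraph V) : Matrix V V ℝ :=
  fun i j => (G.dist i j : ℝ)

/-- The distance spectral radius `λ₁(D(G))`: the largest eigenvalue of the distance matrix. -/
noncomputable def distSpecRad {V : Type*} [Fintype V] (G : SimpleGraph V) : ℝ :=
  sSup {μ : ℝ | ∃ v : V → ℝ, v ≠ 0 ∧ (distMatrix G).mulVec v = μ • v}

/-- The join `G ∨ H` of two graphs: all edges between the parts are added. -/
def graphJoin {α β : Type*} (G : SimpleGraph α) (H : SimpleGraph β) :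
    SimpleGraph (α ⊕ β) where
  Adj x y :=
    match x, y with
    | Sum.inl a, Sum.inl a' => G.Adj a a'
    | Sum.inr b, Sum.inr b' => H.Adj b b'
    | Sum.inl _, Sum.inr _ => True
    | Sum.inr _, Sum.inl _ => True
  symm := ⟨by rintro (a | a) (b | b) h <;> first | exact G.adj_symm h | exact H.adj_symm h | trivial⟩
  loopless := ⟨by rintro (a | a) h <;> first | exact G.irrefl h | exact H.irrefl h⟩

/-- The disjoint union `G + H` of two graphs. -/
def graphSum {α β : Type*} (G : SimpleGraph α) (H : SimpleGraph β) :
    SimpleGraph (α ⊕ β) where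
  Adj x y :=
    match x, y with
    | Sum.inl a, Sum.inl a' => G.Adj a a'
    | Sum.inr b, Sum.inr b' => H.Adj b b'
    | _, _ => False
  symm := ⟨by rintro (a | a) (b | b) h <;> first | exact G.adj_symm h | exact H.adj_symm h | exact h⟩
  loopless := ⟨by rintro (a | a) h <;> first | exact G.irrefl h | exact H.irrefl h⟩

/-- `m` pairwise disjoint copies of the complete graph `K_p`. -/
def repK (m p : ℕ) : SimpleGraph (Fin m × Fin p) where
  Adj x y := x.1 = y.1 ∧ x ≠ y
  symm := ⟨fun _ _ h => ⟨h.1.symm, h.2.symm⟩⟩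
  loopless := ⟨fun _ h => h.2 rfl⟩

/-- The disjoint union of cliques `K_{m 0} + K_{m 1} + ⋯`. -/
def cliquesGraph {c : ℕ} (m : Fin c → ℕ) : SimpleGraph (Σ i, Fin (m i)) where
  Adj x y := x.1 = y.1 ∧ x ≠ y
  symm := ⟨fun _ _ h => ⟨h.1.symm, h.2.symm⟩⟩
  loopless := ⟨fun _ h => h.2 rfl⟩

/-- `G` is `t`-tough: whenever deleting a vertex set `S` disconnects the graph,
`|S| ≥ t · c(G - S)`. -/
def IsTTough {V : Type*} [Fintype V] (t : ℝ) (G : SimpleGraph V) : Prop :=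
  ∀ S : Finset V, ¬ (G.induce ((S : Set V)ᶜ)).Connected →
    t * Nat.card (G.induce ((S : Set V)ᶜ)).ConnectedComponent ≤ (S.card : ℝ)


section Aux


/-- The secular sum `f(t) = ∑ kᵢ/(t+kᵢ+1)`. -/
noncomputable def ffun {c : ℕ} (k : Fin c → ℕ) (t : ℝ) : ℝ :=
  ∑ i, (k i : ℝ) / (t + k i + 1)

/-- The secular function `Ψ(t) = f(t) (2 + s/(t-s+1))`. -/
noncomputable def PsiF {c : ℕ} (s : ℕ) (k : Fin c → ℕ) (t : ℝ) : ℝ :=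
  ffun k t * (2 + s / (t - s + 1))

lemma ffun_pos {c : ℕ} (k : Fin (c + 1) → ℕ) (hk : ∀ i, 1 ≤ k i) {t : ℝ} (ht : 0 ≤ t) :
    0 < ffun k t := by
  apply Finset.sum_pos
  · intro i _
    have h1 : (1 : ℝ) ≤ (k i : ℝ) := by exact_mod_cast hk i
    have : (0:ℝ) < t + k i + 1 := by linarith
    positivity
  · exact univ_nonempty

lemma ffun_anti {c : ℕ} (k : Fin (c + 1) → ℕ) (hk : ∀ i, 1 ≤ k i) {t₁ t₂ : ℝ}
    (ht₁ : 0 ≤ t₁) (h12 : t₁ < t₂) : ffun k t₂ < ffun k t₁ := by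
  apply Finset.sum_lt_sum_of_nonempty univ_nonempty
  intro i _
  have h1 : (1 : ℝ) ≤ (k i : ℝ) := by exact_mod_cast hk i
  exact div_lt_div_of_pos_left (by linarith) (by linarith) (by linarith)

lemma ffun_anti_le {c : ℕ} (k : Fin (c + 1) → ℕ) (hk : ∀ i, 1 ≤ k i) {t₁ t₂ : ℝ}
    (ht₁ : 0 ≤ t₁) (h12 : t₁ ≤ t₂) : ffun k t₂ ≤ ffun k t₁ := by
  rcases eq_or_lt_of_le h12 with rfl | h
  · exact le_refl _
  · exact (ffun_anti k hk ht₁ h).le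

lemma PsiF_strictAntiOn {c s : ℕ} (hs : 0 < s) (k : Fin (c + 1) → ℕ) (hk : ∀ i, 1 ≤ k i) :
    StrictAntiOn (PsiF s k) (Set.Ioi ((s : ℝ) - 1)) := by
  intro t₁ ht₁ t₂ ht₂ h12
  have hs1 : (1:ℝ) ≤ (s:ℝ) := by exact_mod_cast hs
  simp only [Set.mem_Ioi] at ht₁ ht₂
  have h0 : (0:ℝ) ≤ t₁ := by linarith
  have hd1 : (0:ℝ) < t₁ - s + 1 := by linarith
  have hd2 : (0:ℝ) < t₂ - s + 1 := by linarith
  have hf : ffun k t₂ < ffun k t₁ := ffun_anti k hk h0 h12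
  have hg : (2 : ℝ) + s / (t₂ - s + 1) ≤ 2 + s / (t₁ - s + 1) := by
    have : (s:ℝ) / (t₂ - s + 1) ≤ s / (t₁ - s + 1) :=
      div_le_div_of_nonneg_left (by linarith) hd1 (by linarith)
    linarith
  have hgpos : (0:ℝ) < 2 + s / (t₂ - s + 1) := by positivity
  have hf1pos : 0 ≤ ffun k t₁ := (ffun_pos k hk h0).le
  exact mul_lt_mul hf hg hgpos hf1pos

lemma exists_root {c s : ℕ} (hs : 0 < s) (k : Fin (c + 1) → ℕ) (hk : ∀ i, 1 ≤ k i) :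
    ∃ t : ℝ, (s : ℝ) - 1 < t ∧ PsiF s k t = 1 := by
  have hs1 : (1:ℝ) ≤ (s:ℝ) := by exact_mod_cast hs
  set fs : ℝ := ffun k s with hfs
  have hfs0 : 0 < fs := ffun_pos k hk (by linarith)
  set ε : ℝ := min 1 (s * fs) with hε
  have hε0 : 0 < ε := lt_min one_pos (by positivity)
  have hε1 : ε ≤ 1 := min_le_left _ _
  have hεsf : ε ≤ s * fs := min_le_right _ _
  set lo : ℝ := (s : ℝ) - 1 + ε with hlo
  set K : ℝ := ∑ i, (k i : ℝ) with hK
  have hK1 : (1:ℝ) ≤ K := by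
    have h1 : (1:ℝ) ≤ (k 0 : ℝ) := by exact_mod_cast hk 0
    calc (1:ℝ) ≤ (k 0:ℝ) := h1
      _ ≤ K := Finset.single_le_sum (f := fun i => (k i:ℝ)) (fun i _ => by positivity)
          (mem_univ 0)
  set hi : ℝ := K * (s + 2) + 2 * s + 2 with hhi
  have hlos : lo ≤ (s:ℝ) := by rw [hlo]; linarith
  have hlogt : (s:ℝ) - 1 < lo := by rw [hlo]; linarith
  have hlo0 : (0:ℝ) ≤ lo := by rw [hlo]; linarith
  have hhis : (s:ℝ) ≤ hi := by rw [hhi]; nlinarith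
  have hlohi : lo ≤ hi := le_trans hlos hhis
  have hhi0 : (0:ℝ) < hi := by linarith
  -- Ψ(lo) ≥ 1
  have hPlo : 1 ≤ PsiF s k lo := by
    have hflo : fs ≤ ffun k lo := ffun_anti_le k hk hlo0 hlos
    have hsub : lo - s + 1 = ε := by rw [hlo]; ring
    have hrw : PsiF s k lo = ffun k lo * (2 + s / ε) := by rw [PsiF, hsub]
    rw [hrw]
    have hse : (1:ℝ) / fs ≤ (s:ℝ) / ε := by
      rw [div_le_div_iff₀ hfs0 hε0]
      nlinarith
    have hfl0 : 0 < ffun k lo := lt_of_lt_of_le hfs0 hflo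
    calc (1:ℝ) = fs * (1 / fs) := by field_simp
      _ ≤ ffun k lo * (2 + s / ε) := by
          apply mul_le_mul hflo (by linarith) (by positivity) hfl0.le
  -- Ψ(hi) ≤ 1
  have hPhi : PsiF s k hi ≤ 1 := by
    have hfhi : ffun k hi ≤ K / hi := by
      rw [ffun, hK, Finset.sum_div]
      apply Finset.sum_le_sum
      intro i _
      have hki : (0:ℝ) ≤ (k i : ℝ) := Nat.cast_nonneg _
      exact div_le_div_of_nonneg_left hki hhi0 (by linarith)
    have hfac : (2:ℝ) + s / (hi - s + 1) ≤ s + 2 := by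
      have h1 : (1:ℝ) ≤ hi - s + 1 := by linarith
      have : (s:ℝ) / (hi - s + 1) ≤ s := div_le_self (by positivity) h1
      linarith
    have hfhi0 : 0 ≤ ffun k hi := (ffun_pos k hk (by linarith)).le
    have hKhi0 : (0:ℝ) ≤ K / hi := by positivity
    have hfacnn : (0:ℝ) ≤ 2 + s / (hi - s + 1) := by
      have : (0:ℝ) ≤ (s:ℝ) / (hi - s + 1) := div_nonneg (by positivity) (by linarith)
      linarith
    calc PsiF s k hi ≤ (K / hi) * (s + 2) :=
          mul_le_mul hfhi hfac hfacnn hKhi0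
      _ = K * (s + 2) / hi := by ring
      _ ≤ 1 := by rw [div_le_one hhi0]; linarith
  -- IVT
  have hcont : ContinuousOn (PsiF s k) (Set.Icc lo hi) := by
    apply ContinuousOn.mul
    · apply continuousOn_finset_sum
      intro i _
      apply ContinuousOn.div continuousOn_const
      · fun_prop
      · intro x hx
        have := hx.1
        have h1 : (0:ℝ) ≤ (k i : ℝ) := by positivity
        nlinarith [hx.1]
    · apply ContinuousOn.add continuousOn_const
      apply ContinuousOn.div continuousOn_const
      · fun_prop
      · intro x hx
        nlinarith [hx.1]
  have h1mem : (1:ℝ) ∈ Set.Icc (PsiF s k hi) (PsiF s k lo) := ⟨hPhi, hPlo⟩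
  obtain ⟨t, htmem, ht1⟩ := intermediate_value_Icc' hlohi hcont h1mem
  exact ⟨t, lt_of_lt_of_le hlogt htmem.1, ht1⟩

/-- Shifting one unit of mass from a smaller part to a bigger part strictly
decreases `g(α)+g(β)` for `g(x) = x/(t+x+1)`. -/
lemma shift_lt_real {t α β : ℝ} (ht : 0 ≤ t) (hβ : 1 ≤ β) (hβα : β ≤ α) :
    (α + 1) / (t + (α + 1) + 1) + (β - 1) / (t + (β - 1) + 1)
      < α / (t + α + 1) + β / (t + β + 1) := by
  have d1 : (0:ℝ) < t + α + 2 := by linarith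
  have d2 : (0:ℝ) < t + β := by linarith
  have d3 : (0:ℝ) < t + α + 1 := by linarith
  have d4 : (0:ℝ) < t + β + 1 := by linarith
  have n1 : t + α + 1 ≠ 0 := d3.ne'
  have n2 : t + (α + 1) + 1 ≠ 0 := by intro h; rw [← h] at d1; linarith
  have n3 : t + β + 1 ≠ 0 := d4.ne'
  have n4 : t + (β - 1) + 1 ≠ 0 := by intro h; rw [← h] at d2; linarith
  have e1 : α / (t + α + 1) - (α + 1) / (t + (α + 1) + 1)
      = -((t + 1) / ((t + α + 1) * (t + α + 2))) := by
    field_simp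
    ring
  have e2 : β / (t + β + 1) - (β - 1) / (t + (β - 1) + 1)
      = (t + 1) / ((t + β) * (t + β + 1)) := by
    field_simp
    ring
  have hlt : (t + 1) / ((t + α + 1) * (t + α + 2)) < (t + 1) / ((t + β) * (t + β + 1)) := by
    apply div_lt_div_of_pos_left (by linarith) (by positivity)
    nlinarith
  linarith

/-- cast version for naturals. -/
lemma shift_lt_nat {t : ℝ} (ht : 0 ≤ t) {a b : ℕ} (hb : 1 ≤ b) (hba : b ≤ a) :
    ((a + 1 : ℕ) : ℝ) / (t + ((a + 1 : ℕ) : ℝ) + 1) + ((b - 1 : ℕ) : ℝ) / (t + ((b - 1 : ℕ) : ℝ) + 1)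
      < (a : ℝ) / (t + a + 1) + (b : ℝ) / (t + b + 1) := by
  have hcast1 : ((a + 1 : ℕ) : ℝ) = (a : ℝ) + 1 := by push_cast; ring
  have hcast2 : ((b - 1 : ℕ) : ℝ) = (b : ℝ) - 1 := by
    have : (1:ℕ) ≤ b := hb
    push_cast [this]; ring
  rw [hcast1, hcast2]
  exact shift_lt_real ht (by exact_mod_cast hb) (by exact_mod_cast hba)

lemma sum_split {M : Type*} [AddCommMonoid M] {c' : ℕ} {j : Fin (c' + 1)} (hj0 : j ≠ 0)
    (f : Fin (c' + 1) → M) :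
    ∑ i, f i = f 0 + f j + ∑ i ∈ (univ.erase 0).erase j, f i := by
  rw [← Finset.add_sum_erase _ f (mem_univ 0),
    ← Finset.add_sum_erase _ f (by simp [hj0] : j ∈ univ.erase (0 : Fin (c'+1))), add_assoc]

/-- The extremal size vector with the same total. -/
def extOf {c' : ℕ} (p : ℕ) (k : Fin (c' + 1) → ℕ) : Fin (c' + 1) → ℕ :=
  fun i => if i = 0 then (∑ j, k j) - c' * p else p

lemma ffun_extOf_le {c' : ℕ} (p : ℕ) {t : ℝ} (ht : 0 ≤ t) :
    ∀ D (k : Fin (c' + 1) → ℕ), ((∑ j, k j) - k 0 - c' * p = D) →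
      (∀ i, p ≤ k i) → (∀ i, k i ≤ k 0) →
      ffun (extOf p k) t ≤ ffun k t ∧
        ((∃ j, j ≠ 0 ∧ k j ≠ p) → ffun (extOf p k) t < ffun k t) := by
  intro D
  induction D using Nat.strong_induction_on with
  | _ D IH =>
    intro k hD hlow hup
    by_cases hall : ∀ j : Fin (c' + 1), j ≠ 0 → k j = p
    · have hsum : ∑ j, k j = k 0 + c' * p := by
        rw [Fin.sum_univ_succ]
        congr 1
        calc ∑ j : Fin c', k j.succ = ∑ _j : Fin c', p :=
              Finset.sum_congr rfl fun j _ => hall _ (Fin.succ_ne_zero j)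
          _ = c' * p := by simp [mul_comm]
      have hext : extOf p k = k := by
        funext i
        by_cases hi : i = 0
        · subst hi; simp [extOf, hsum]
        · simp [extOf, hi, (hall i hi).symm]
      rw [hext]
      exact ⟨le_refl _, fun ⟨j, hj0, hjp⟩ => absurd (hall j hj0) hjp⟩
    · push_neg at hall
      obtain ⟨j, hj0, hjp⟩ := hall
      have hjp' : p < k j := lt_of_le_of_ne (hlow j) (Ne.symm hjp)
      have hj1 : 1 ≤ k j := by omega
      set k' : Fin (c' + 1) → ℕ :=
        Function.update (Function.update k 0 (k 0 + 1)) j (k j - 1) with hk'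
      have hk'0 : k' 0 = k 0 + 1 := by
        rw [hk', Function.update_of_ne (Ne.symm hj0), Function.update_self]
      have hk'j : k' j = k j - 1 := by rw [hk', Function.update_self]
      have hk'other : ∀ i, i ≠ 0 → i ≠ j → k' i = k i := by
        intro i h0 hjne; rw [hk', Function.update_of_ne hjne, Function.update_of_ne h0]
      have htail : ∀ i ∈ (univ.erase (0 : Fin (c'+1))).erase j, k' i = k i := by
        intro i hi
        rw [Finset.mem_erase, Finset.mem_erase] at hi
        exact hk'other i hi.2.1 hi.1
      have hsum' : ∑ i, k' i = ∑ i, k i := by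
        have e1 := sum_split hj0 k'
        have e2 := sum_split hj0 k
        have e3 : ∑ i ∈ (univ.erase (0 : Fin (c'+1))).erase j, k' i
            = ∑ i ∈ (univ.erase (0 : Fin (c'+1))).erase j, k i :=
          Finset.sum_congr rfl htail
        rw [hk'0, hk'j] at e1
        omega
      have hlow' : ∀ i, p ≤ k' i := by
        intro i
        by_cases h0 : i = 0
        · subst h0; rw [hk'0]; exact le_trans (hlow 0) (Nat.le_succ _)
        by_cases hje : i = j
        · subst hje; rw [hk'j]; omega
        · rw [hk'other i h0 hje]; exact hlow i
      have hup' : ∀ i, k' i ≤ k' 0 := by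
        intro i
        rw [hk'0]
        by_cases h0 : i = 0
        · rw [h0, hk'0]
        by_cases hje : i = j
        · rw [hje, hk'j]; have := hup j; omega
        · rw [hk'other i h0 hje]; exact le_trans (hup i) (Nat.le_succ _)
      -- the total is at least k 0 + c' * p + 1
      have hbig : k 0 + c' * p + 1 ≤ ∑ i, k i := by
        have h1 : ∑ _i ∈ univ.erase (0 : Fin (c'+1)), p < ∑ i ∈ univ.erase (0 : Fin (c'+1)), k i :=
          Finset.sum_lt_sum (fun i _ => hlow i) ⟨j, by simp [hj0], hjp'⟩
        have hcard : (univ.erase (0 : Fin (c' + 1))).card = c' := by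
          rw [Finset.card_erase_of_mem (mem_univ _)]; simp
        rw [Finset.sum_const, hcard, smul_eq_mul] at h1
        have h2 : k 0 + ∑ i ∈ univ.erase (0 : Fin (c'+1)), k i = ∑ i, k i :=
          Finset.add_sum_erase _ k (mem_univ 0)
        omega
      have hD1 : 1 ≤ D := by omega
      have hD' : (∑ i, k' i) - k' 0 - c' * p = D - 1 := by
        rw [hsum', hk'0]; omega
      obtain ⟨ihle, _⟩ := IH (D - 1) (by omega) k' hD' hlow' hup'
      have hextEq : extOf p k' = extOf p k := by
        funext i; simp only [extOf, hsum']
      have hstrict : ffun k' t < ffun k t := by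
        rw [ffun, ffun, sum_split hj0 (fun i => (k' i : ℝ) / (t + k' i + 1)),
          sum_split hj0 (fun i => (k i : ℝ) / (t + k i + 1))]
        have htail2 : ∑ i ∈ (univ.erase (0 : Fin (c'+1))).erase j, (k' i : ℝ) / (t + k' i + 1)
            = ∑ i ∈ (univ.erase (0 : Fin (c'+1))).erase j, (k i : ℝ) / (t + k i + 1) := by
          apply Finset.sum_congr rfl; intro i hi; rw [htail i hi]
        simp only [hk'0, hk'j, htail2]
        linarith [shift_lt_nat ht hj1 (hup j)]
      rw [← hextEq]
      exact ⟨le_of_lt (lt_of_le_of_lt ihle hstrict),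
        fun _ => lt_of_le_of_lt ihle hstrict⟩

/-- A symmetric nonnegative matrix with a positive eigenvector: the corresponding
eigenvalue is the largest. -/
lemma sSup_eigenvalues_eq {V : Type*} [Fintype V] [Nonempty V] (A : Matrix V V ℝ)
    (hsym : ∀ i j, A i j = A j i) (hnn : ∀ i j, 0 ≤ A i j)
    {x : V → ℝ} (hx : ∀ i, 0 < x i) {μ : ℝ} (hAx : A.mulVec x = μ • x) :
    sSup {μ' : ℝ | ∃ w : V → ℝ, w ≠ 0 ∧ A.mulVec w = μ' • w} = μ := by
  apply IsGreatest.csSup_eq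
  constructor
  · refine ⟨x, ?_, hAx⟩
    intro h
    exact (hx (Classical.arbitrary V)).ne' (congrFun h (Classical.arbitrary V))
  · rintro μ' ⟨w, hw0, hAw⟩
    have hmv : ∀ i, (A.mulVec w) i = ∑ j, A i j * w j := fun i => rfl
    have hmvx : ∀ i, (A.mulVec x) i = ∑ j, A i j * x j := fun i => rfl
    have key : ∀ i, |μ'| * |w i| ≤ ∑ j, A i j * |w j| := by
      intro i
      have h1 : (A.mulVec w) i = μ' * w i := by rw [hAw]; simp
      calc |μ'| * |w i| = |μ' * w i| := (abs_mul _ _).symm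
        _ = |∑ j, A i j * w j| := by rw [← hmv, h1]
        _ ≤ ∑ j, |A i j * w j| := Finset.abs_sum_le_sum_abs _ _
        _ = ∑ j, A i j * |w j| :=
            Finset.sum_congr rfl fun j _ => by rw [abs_mul, abs_of_nonneg (hnn i j)]
    have hS : 0 < ∑ j, x j * |w j| := by
      obtain ⟨i0, hi0⟩ : ∃ i, w i ≠ 0 := by
        by_contra h; push_neg at h; exact hw0 (funext h)
      apply Finset.sum_pos' (fun j _ => mul_nonneg (hx j).le (abs_nonneg _))
      exact ⟨i0, mem_univ _, mul_pos (hx i0) (abs_pos.mpr hi0)⟩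
    have h2 : ∑ i, x i * (|μ'| * |w i|) ≤ ∑ i, x i * ∑ j, A i j * |w j| :=
      Finset.sum_le_sum fun i _ => mul_le_mul_of_nonneg_left (key i) (hx i).le
    have h3 : ∑ i, x i * ∑ j, A i j * |w j| = μ * ∑ j, x j * |w j| := by
      calc ∑ i, x i * ∑ j, A i j * |w j| = ∑ i, ∑ j, x i * (A i j * |w j|) := by
            simp_rw [Finset.mul_sum]
        _ = ∑ j, ∑ i, x i * (A i j * |w j|) := Finset.sum_comm
        _ = ∑ j, (∑ i, A j i * x i) * |w j| := by
            refine Finset.sum_congr rfl fun j _ => ?_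
            rw [Finset.sum_mul]
            refine Finset.sum_congr rfl fun i _ => ?_
            rw [hsym j i]; ring
        _ = ∑ j, (μ * x j) * |w j| := by
            refine Finset.sum_congr rfl fun j _ => ?_
            have : (A.mulVec x) j = μ * x j := by rw [hAx]; simp
            rw [← hmvx, this]
        _ = μ * ∑ j, x j * |w j| := by
            rw [Finset.mul_sum]; exact Finset.sum_congr rfl fun j _ => by ring
    have h4 : |μ'| * ∑ j, x j * |w j| ≤ μ * ∑ j, x j * |w j| := by
      calc |μ'| * ∑ j, x j * |w j| = ∑ i, x i * (|μ'| * |w i|) := by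
            rw [Finset.mul_sum]; exact Finset.sum_congr rfl fun i _ => by ring
        _ ≤ ∑ i, x i * ∑ j, A i j * |w j| := h2
        _ = μ * ∑ j, x j * |w j| := h3
    have h5 : |μ'| ≤ μ := le_of_mul_le_mul_right h4 hS
    exact (le_abs_self μ').trans h5

lemma distSpecRad_eq_root {V : Type*} [Fintype V] [DecidableEq V] {c s : ℕ}
    (hs : 0 < s) (G : SimpleGraph V) (π : V → Option (Fin (c + 1)))
    (k : Fin (c + 1) → ℕ) (hk : ∀ i, 1 ≤ k i)
    (hfib : ∀ h : Option (Fin (c + 1)) → ℝ,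
      ∑ v, h (π v) = s * h none + ∑ i, (k i : ℝ) * h (some i))
    (hadj : ∀ u v, G.Adj u v ↔ u ≠ v ∧ (π u = none ∨ π v = none ∨ π u = π v))
    {t : ℝ} (ht : (s : ℝ) - 1 < t) (hroot : PsiF s k t = 1) :
    distSpecRad G = t := by
  classical
  have hs1 : (1 : ℝ) ≤ (s : ℝ) := by exact_mod_cast hs
  have ht0 : (0 : ℝ) ≤ t := by linarith
  have htd : (0 : ℝ) < t - s + 1 := by linarith
  -- a vertex in the `s`-part
  have hv0 : ∃ v0, π v0 = none := by
    by_contra h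
    push_neg at h
    have hfib1 := hfib (fun o => if o = none then 1 else 0)
    have hL : ∑ v : V, (fun o => if o = none then (1:ℝ) else 0) (π v) = 0 :=
      Finset.sum_eq_zero fun v _ => by simp [h v]
    rw [hL] at hfib1
    have hzero : s = 0 := by
      have := hfib1.symm
      simpa using this
    omega
  obtain ⟨v0, hv0⟩ := hv0
  haveI : Nonempty V := ⟨v0⟩
  -- the matrix
  set M : Matrix V V ℝ := fun u v =>
    if u = v then 0 else if (π u = none ∨ π v = none ∨ π u = π v) then 1 else 2 with hMdef
  have hM : distMatrix G = M := by
    apply Matrix.ext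
    intro u v
    by_cases huv : u = v
    · subst huv
      simp [distMatrix, hMdef, SimpleGraph.dist_self]
    by_cases hcond : π u = none ∨ π v = none ∨ π u = π v
    · have hadj' : G.Adj u v := (hadj u v).2 ⟨huv, hcond⟩
      have : G.dist u v = 1 := SimpleGraph.dist_eq_one_iff_adj.2 hadj'
      simp [distMatrix, hMdef, this, huv, hcond]
    · have hna : ¬ G.Adj u v := fun h => hcond ((hadj u v).1 h).2
      push_neg at hcond
      obtain ⟨hu, hv', huvne⟩ := hcond
      have hne0u : v0 ≠ u := fun h => hu (h ▸ hv0)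
      have hne0v : v0 ≠ v := fun h => hv' (h ▸ hv0)
      have a1 : G.Adj u v0 := (hadj u v0).2 ⟨Ne.symm hne0u, Or.inr (Or.inl hv0)⟩
      have a2 : G.Adj v0 v := (hadj v0 v).2 ⟨hne0v, Or.inl hv0⟩
      have hle : G.dist u v ≤ 2 := by
        have := SimpleGraph.dist_le
          (SimpleGraph.Walk.cons a1 (SimpleGraph.Walk.cons a2 SimpleGraph.Walk.nil))
        simpa using this
      have hpos : 0 < G.dist u v :=
        SimpleGraph.Reachable.pos_dist_of_ne
          ⟨SimpleGraph.Walk.cons a1 (SimpleGraph.Walk.cons a2 SimpleGraph.Walk.nil)⟩ huv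
      have hne1 : G.dist u v ≠ 1 := fun h => hna (SimpleGraph.dist_eq_one_iff_adj.1 h)
      have h2 : G.dist u v = 2 := by omega
      simp [distMatrix, hMdef, h2, huv, hu, hv', huvne]
  -- the eigenvector
  set b : Fin (c + 1) → ℝ := fun i => 1 / (t + k i + 1) with hbdef
  have hbden : ∀ i, (0:ℝ) < t + k i + 1 := by
    intro i
    have : (1:ℝ) ≤ (k i : ℝ) := by exact_mod_cast hk i
    linarith
  have hb : ∀ i, 0 < b i := fun i => by rw [hbdef]; positivity
  set f : ℝ := ∑ i, (k i : ℝ) * b i with hfdef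
  have hff : f = ffun k t := by
    rw [hfdef, ffun]
    exact Finset.sum_congr rfl fun i _ => by rw [hbdef]; rw [mul_one_div]
  have hf : 0 < f := by
    rw [hfdef]
    apply Finset.sum_pos (fun i _ => ?_) univ_nonempty
    have : (0:ℝ) < (k i : ℝ) := by exact_mod_cast hk i
    exact mul_pos this (hb i)
  set a : ℝ := f / (t - s + 1) with hadef
  have ha : 0 < a := by rw [hadef]; positivity
  have hfeq : f = (t - s + 1) * a := by rw [hadef]; field_simp
  have hkey : s * a + 2 * f = 1 := by
    rw [PsiF, ← hff] at hroot
    have : f * (2 + (s:ℝ) / (t - s + 1)) = 2 * f + s * a := by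
      rw [hadef]; field_simp
    linarith [this ▸ hroot]
  set x : V → ℝ := fun v => (π v).elim a b with hxdef
  have hx : ∀ v, 0 < x v := by
    intro v
    rcases hπ : π v with _ | i
    · simpa [hxdef, hπ] using ha
    · simpa [hxdef, hπ] using hb i
  have hAx : M.mulVec x = t • x := by
    funext u
    have hmv : M.mulVec x u = ∑ v, M u v * x v := rfl
    have hsmul : (t • x) u = t * x u := rfl
    set H : Option (Fin (c + 1)) → ℝ :=
      fun o => (if (π u = none ∨ o = none ∨ π u = o) then (1:ℝ) else 2) * (o.elim a b) with hHdef
    have hterm : ∀ v, M u v * x v = H (π v) - (if v = u then x u else 0) := by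
      intro v
      by_cases hvu : v = u
      · subst hvu
        have hc : (π v = none ∨ π v = none ∨ π v = π v) := Or.inr (Or.inr rfl)
        simp [hMdef, hHdef, hc, hxdef]
      · have : ¬ (u = v) := fun h => hvu h.symm
        simp [hMdef, hHdef, hvu, this, hxdef]
    have hsum1 : ∑ v, M u v * x v = (∑ v, H (π v)) - x u := by
      rw [Finset.sum_congr rfl fun v _ => hterm v, Finset.sum_sub_distrib]
      congr 1
      simp
    have hHnone : H none = a := by simp [hHdef]
    rw [hmv, hsum1, hfib H, hHnone, hsmul]
    rcases hπu : π u with _ | i0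
    · have hHs : ∀ i, H (some i) = b i := by
        intro i
        simp [hHdef, hπu]
      have hxu : x u = a := by simp [hxdef, hπu]
      rw [hxu]
      rw [Finset.sum_congr rfl fun i _ => by rw [hHs i]]
      rw [← hfdef]
      nlinarith [hfeq]
    · have hHs : ∀ i, H (some i) = (if i0 = i then 1 else 2) * b i := by
        intro i
        simp only [hHdef, hπu]
        congr 1
        by_cases h : i0 = i <;> simp [h]
      have hxu : x u = b i0 := by simp [hxdef, hπu]
      rw [hxu]
      rw [Finset.sum_congr rfl fun i _ => by rw [hHs i]]
      have hsum2 : ∑ i, (k i : ℝ) * ((if i0 = i then 1 else 2) * b i)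
          = 2 * f - (k i0 : ℝ) * b i0 := by
        have : ∀ i, (k i : ℝ) * ((if i0 = i then 1 else 2) * b i)
            = 2 * ((k i : ℝ) * b i) - (if i = i0 then (k i : ℝ) * b i else 0) := by
          intro i
          by_cases h : i0 = i
          · subst h; simp; ring
          · have h' : ¬ (i = i0) := fun hh => h hh.symm
            simp [h, h']; ring
        rw [Finset.sum_congr rfl fun i _ => this i, Finset.sum_sub_distrib, ← Finset.mul_sum,
          ← hfdef]
        congr 1
        simp
      rw [hsum2]
      have hb0 : (t + k i0 + 1) * b i0 = 1 := by
        rw [hbdef]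
        field_simp
      nlinarith [hkey, hb0]
  have hMsym : ∀ u v, M u v = M v u := by
    intro u v
    simp only [hMdef]
    by_cases huv : u = v
    · subst huv; rfl
    · have : ¬ (v = u) := fun h => huv h.symm
      simp only [huv, this, if_false]
      congr 1
      · simp only [eq_iff_iff]
        constructor
        · rintro (h | h | h)
          · exact Or.inr (Or.inl h)
          · exact Or.inl h
          · exact Or.inr (Or.inr h.symm)
        · rintro (h | h | h)
          · exact Or.inr (Or.inl h)
          · exact Or.inl h
          · exact Or.inr (Or.inr h.symm)
  have hMnn : ∀ u v, 0 ≤ M u v := by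
    intro u v
    simp only [hMdef]
    split_ifs <;> norm_num
  rw [distSpecRad, hM]
  exact sSup_eigenvalues_eq M hMsym hMnn hx hAx

end Aux

theorem stmt3 (n c s p : ℕ) (hn : 0 < n) (hc : 0 < c) (hs : 0 < s) (hp : 0 < p)
    (m : Fin c → ℕ) (hanti : Antitone m)
    (hfirst : 2 * p ≤ m ⟨0, hc⟩) (hlow : ∀ i, p ≤ m i)
    (hsum : s + ∑ i, m i = n) :
    distSpecRad (graphJoin (⊤ : SimpleGraph (Fin s))
        (graphSum (⊤ : SimpleGraph (Fin (n - s - p * (c - 1)))) (repK (c - 1) p)))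
      ≤ distSpecRad (graphJoin (⊤ : SimpleGraph (Fin s)) (cliquesGraph m)) ∧
    (distSpecRad (graphJoin (⊤ : SimpleGraph (Fin s)) (cliquesGraph m)) =
        distSpecRad (graphJoin (⊤ : SimpleGraph (Fin s))
          (graphSum (⊤ : SimpleGraph (Fin (n - s - p * (c - 1)))) (repK (c - 1) p)))
      ↔ m ⟨0, hc⟩ = n - s - p * (c - 1) ∧ ∀ i : Fin c, i ≠ ⟨0, hc⟩ → m i = p) := by
  classical
  obtain ⟨c', rfl⟩ : ∃ c', c = c' + 1 := ⟨c - 1, by omega⟩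
  suffices h : distSpecRad (graphJoin (⊤ : SimpleGraph (Fin s))
        (graphSum (⊤ : SimpleGraph (Fin (n - s - p * c'))) (repK c' p)))
      ≤ distSpecRad (graphJoin (⊤ : SimpleGraph (Fin s)) (cliquesGraph m)) ∧
      (distSpecRad (graphJoin (⊤ : SimpleGraph (Fin s)) (cliquesGraph m)) =
        distSpecRad (graphJoin (⊤ : SimpleGraph (Fin s))
          (graphSum (⊤ : SimpleGraph (Fin (n - s - p * c'))) (repK c' p)))
      ↔ m 0 = n - s - p * c' ∧ ∀ i : Fin (c' + 1), i ≠ 0 → m i = p) by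
    exact h
  have hfirst' : 2 * p ≤ m 0 := hfirst
  have hm0 : ∀ i, m i ≤ m 0 := fun i => hanti (Fin.zero_le i)
  have hk1 : ∀ i, 1 ≤ m i := fun i => le_trans hp (hlow i)
  have hTsplit : ∑ i, m i = m 0 + ∑ i : Fin c', m i.succ := Fin.sum_univ_succ m
  have hple : c' * p ≤ ∑ i : Fin c', m i.succ := by
    calc c' * p = ∑ _i : Fin c', p := by simp [mul_comm]
      _ ≤ _ := Finset.sum_le_sum fun i _ => hlow _
  have hNT : n - s - p * c' = (∑ i, m i) - c' * p := by
    have := hsum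
    have hmul : p * c' = c' * p := Nat.mul_comm p c'
    omega
  have hNge : m 0 ≤ n - s - p * c' := by omega
  have hN1 : 1 ≤ n - s - p * c' := by omega
  set mext : Fin (c' + 1) → ℕ := fun i => if i = 0 then n - s - p * c' else p with hmext
  have hk2 : ∀ i, 1 ≤ mext i := by
    intro i
    rw [hmext]
    by_cases h : i = 0 <;> simp [h] <;> omega
  have hmext_ext : mext = extOf p m := by
    funext i
    rw [hmext, extOf]
    by_cases h : i = 0 <;> simp [h] <;> omega
  -- roots
  obtain ⟨t1, ht1, hr1⟩ := exists_root hs m hk1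
  obtain ⟨t2, ht2, hr2⟩ := exists_root hs mext hk2
  have hs1 : (1:ℝ) ≤ (s:ℝ) := by exact_mod_cast hs
  have ht10 : (0:ℝ) ≤ t1 := by linarith
  -- graph 1
  set π1 : (Fin s ⊕ Σ i, Fin (m i)) → Option (Fin (c' + 1)) :=
    Sum.elim (fun _ => none) (fun q => some q.1) with hπ1
  have hfib1 : ∀ h : Option (Fin (c' + 1)) → ℝ,
      ∑ v, h (π1 v) = s * h none + ∑ i, (m i : ℝ) * h (some i) := by
    intro h
    rw [Fintype.sum_sum_type]
    congr 1
    · simp [hπ1, mul_comm]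
    · rw [← Finset.univ_sigma_univ, Finset.sum_sigma]
      exact Finset.sum_congr rfl fun i _ => by simp [hπ1, mul_comm]
  have hadj1 : ∀ u v, (graphJoin (⊤ : SimpleGraph (Fin s)) (cliquesGraph m)).Adj u v ↔
      u ≠ v ∧ (π1 u = none ∨ π1 v = none ∨ π1 u = π1 v) := by
    rintro (a | q) (a' | q')
    · simp [graphJoin, hπ1]
    · simp [graphJoin, hπ1]
    · simp [graphJoin, hπ1]
    · simp only [graphJoin, hπ1, Sum.elim_inr, cliquesGraph]
      constructor
      · rintro ⟨h1, h2⟩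
        exact ⟨by simpa using h2, Or.inr (Or.inr (by rw [h1]))⟩
      · rintro ⟨h1, h2⟩
        rcases h2 with h | h | h
        · exact absurd h (by simp)
        · exact absurd h (by simp)
        · exact ⟨by simpa using h, by simpa using h1⟩
  have hG1 : distSpecRad (graphJoin (⊤ : SimpleGraph (Fin s)) (cliquesGraph m)) = t1 :=
    distSpecRad_eq_root hs _ π1 m hk1 hfib1 hadj1 ht1 hr1
  -- graph 2
  set π2 : (Fin s ⊕ (Fin (n - s - p * c') ⊕ Fin c' × Fin p)) → Option (Fin (c' + 1)) :=
    Sum.elim (fun _ => none) (Sum.elim (fun _ => some 0) (fun q => some q.1.succ)) with hπ2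
  have hfib2 : ∀ h : Option (Fin (c' + 1)) → ℝ,
      ∑ v, h (π2 v) = s * h none + ∑ i, (mext i : ℝ) * h (some i) := by
    intro h
    rw [Fintype.sum_sum_type, Fintype.sum_sum_type]
    have e1 : ∑ x : Fin s, h (π2 (Sum.inl x)) = s * h none := by simp [hπ2, mul_comm]
    have e2 : ∑ x : Fin (n - s - p * c'), h (π2 (Sum.inr (Sum.inl x)))
        = (n - s - p * c' : ℕ) * h (some 0) := by
      simp [hπ2, mul_comm]
    have e3 : ∑ q : Fin c' × Fin p, h (π2 (Sum.inr (Sum.inr q)))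
        = ∑ i : Fin c', (p : ℝ) * h (some i.succ) := by
      rw [Fintype.sum_prod_type]
      exact Finset.sum_congr rfl fun i _ => by simp [hπ2, mul_comm]
    rw [e1, e2, e3, Fin.sum_univ_succ]
    have h0 : mext 0 = n - s - p * c' := by rw [hmext]; simp
    have hsucc : ∀ i : Fin c', mext i.succ = p := by
      intro i; rw [hmext]; simp [Fin.succ_ne_zero i]
    rw [h0]
    have heq : ∑ i : Fin c', (mext i.succ : ℝ) * h (some i.succ)
        = ∑ i : Fin c', (p : ℝ) * h (some i.succ) :=
      Finset.sum_congr rfl fun i _ => by rw [hsucc i]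
    rw [heq]
  have hadj2 : ∀ u v, (graphJoin (⊤ : SimpleGraph (Fin s))
      (graphSum (⊤ : SimpleGraph (Fin (n - s - p * c'))) (repK c' p))).Adj u v ↔
      u ≠ v ∧ (π2 u = none ∨ π2 v = none ∨ π2 u = π2 v) := by
    rintro (a | (x | q)) (a' | (x' | q'))
    · simp [graphJoin, hπ2]
    · simp [graphJoin, hπ2]
    · simp [graphJoin, hπ2]
    · simp [graphJoin, hπ2]
    · simp [graphJoin, graphSum, hπ2]
    · simp [graphJoin, graphSum, hπ2, (Fin.succ_ne_zero q'.1).symm]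
    · simp [graphJoin, hπ2]
    · simp [graphJoin, graphSum, hπ2, Fin.succ_ne_zero q.1]
    · simp only [graphJoin, graphSum, hπ2, Sum.elim_inr, repK]
      constructor
      · rintro ⟨h1, h2⟩
        refine ⟨by simpa using h2, Or.inr (Or.inr ?_)⟩
        rw [h1]
      · rintro ⟨h1, h2⟩
        rcases h2 with h | h | h
        · exact absurd h (by simp)
        · exact absurd h (by simp)
        · refine ⟨?_, by simpa using h1⟩
          have := Option.some.inj h
          exact Fin.succ_inj.mp this
  have hG2 : distSpecRad (graphJoin (⊤ : SimpleGraph (Fin s))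
      (graphSum (⊤ : SimpleGraph (Fin (n - s - p * c'))) (repK c' p))) = t2 :=
    distSpecRad_eq_root hs _ π2 mext hk2 hfib2 hadj2 ht2 hr2
  rw [hG1, hG2]
  -- comparison
  obtain ⟨hshur_le, hshur_lt⟩ :=
    ffun_extOf_le p ht10 ((∑ i, m i) - m 0 - c' * p) m rfl hlow hm0
  rw [← hmext_ext] at hshur_le hshur_lt
  by_cases hcase : ∀ j : Fin (c' + 1), j ≠ 0 → m j = p
  · -- extremal: equality
    have hsump : ∑ i : Fin c', m i.succ = c' * p := by
      calc ∑ i : Fin c', m i.succ = ∑ _i : Fin c', p :=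
            Finset.sum_congr rfl fun i _ => hcase _ (Fin.succ_ne_zero i)
        _ = c' * p := by simp [mul_comm]
    have hmm : mext = m := by
      funext i
      rw [hmext]
      by_cases h : i = 0
      · subst h; simp; omega
      · simp [h, (hcase i h).symm]
    have ht12 : t1 = t2 := by
      have h1 : PsiF s mext t1 = 1 := by rw [hmm]; exact hr1
      exact (PsiF_strictAntiOn hs mext hk2).injOn (Set.mem_Ioi.mpr ht1)
        (Set.mem_Ioi.mpr ht2) (h1.trans hr2.symm)
    refine ⟨le_of_eq ht12.symm, ?_, ?_⟩
    · intro _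
      exact ⟨by omega, fun i hi => hcase i hi⟩
    · intro _
      exact ht12
  · -- non-extremal: strict inequality
    push_neg at hcase
    obtain ⟨j, hj0, hjp⟩ := hcase
    have hstrict : ffun mext t1 < ffun m t1 := hshur_lt ⟨j, hj0, hjp⟩
    have hfacpos : (0:ℝ) < 2 + s / (t1 - s + 1) := by
      have h1 : (0:ℝ) < t1 - s + 1 := by linarith
      positivity
    have hPsilt : PsiF s mext t1 < PsiF s m t1 := by
      rw [PsiF, PsiF]
      exact mul_lt_mul_of_pos_right hstrict hfacpos
    have hlt : t2 < t1 := by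
      by_contra hcon
      push_neg at hcon
      rcases eq_or_lt_of_le hcon with h | h
      · rw [← h] at hr2
        rw [hr1, hr2] at hPsilt
        exact lt_irrefl _ hPsilt
      · have := (PsiF_strictAntiOn hs mext hk2) (Set.mem_Ioi.mpr ht1) (Set.mem_Ioi.mpr ht2) h
        rw [hr2] at this
        rw [hr1] at hPsilt
        linarith
    refine ⟨le_of_lt hlt, ?_, ?_⟩
    · intro h
      exact absurd h (by linarith)
    · rintro ⟨_, hall⟩
      exact absurd (hall j hj0) hjp
end

section
/- Let δ ≥ 2 and s be integers with δ + 1 ≤ s ≤ (n−1)/2 and n ≥ 8δ. Then λ₁(D(K_δ ∨ (K_{n−2δ} + δK₁))) < λ₁(D(K_s ∨ (K_{n−2s} + sK₁))). -/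
open SimpleGraph Finset

/-! ### Auxiliary real-analysis lemmas -/

/-- Characteristic cubic of the 3×3 quotient matrix of `K_p ∨ (K_c + pK₁)`. -/
noncomputable def gval (p c t : ℝ) : ℝ :=
  (t - p + 1) * ((t - c + 1) * (t - 2*p + 2) - 4*c*p) - c*p*(t+2) - p^2*(t+c+1)

/-- The 2×2 minor determinant. -/
noncomputable def dval (p c t : ℝ) : ℝ := (t - c + 1) * (t - 2*p + 2) - 4*c*p

/-- Largest root of `dval`. -/
noncomputable def aval (p c : ℝ) : ℝ :=
  ((c + 2*p - 3) + Real.sqrt ((c - 2*p + 1)^2 + 16*c*p)) / 2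

lemma disc_nonneg (p c : ℝ) (hp : 2 ≤ p) (hc : 1 ≤ c) :
    0 ≤ (c - 2*p + 1)^2 + 16*c*p := by positivity

lemma dval_factor (p c t : ℝ) (hp : 2 ≤ p) (hc : 1 ≤ c) :
    dval p c t = (t - aval p c) * (t - ((c + 2*p - 3) - Real.sqrt ((c - 2*p + 1)^2 + 16*c*p)) / 2) := by
  have h := Real.sq_sqrt (disc_nonneg p c hp hc)
  unfold dval aval
  nlinarith [h]

lemma aval_lb (p c : ℝ) (hp : 2 ≤ p) (hc : 1 ≤ c) : (c + 2*p - 3)/2 ≤ aval p c := by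
  have := Real.sqrt_nonneg ((c - 2*p + 1)^2 + 16*c*p)
  unfold aval; linarith

lemma aval_pos (p c : ℝ) (hp : 2 ≤ p) (hc : 1 ≤ c) : 0 < aval p c := by
  have := aval_lb p c hp hc; linarith

lemma aval_ub (p c : ℝ) (hp : 2 ≤ p) (hc : 1 ≤ c) : aval p c ≤ 5*(2*p+c) := by
  have h1 : Real.sqrt ((c - 2*p + 1)^2 + 16*c*p) ≤ 4*(2*p+c) := by
    rw [show (4*(2*p+c) : ℝ) = Real.sqrt ((4*(2*p+c))^2) by
      rw [Real.sqrt_sq (by linarith)]]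
    apply Real.sqrt_le_sqrt
    nlinarith
  unfold aval; linarith

lemma dval_pos (p c t : ℝ) (hp : 2 ≤ p) (hc : 1 ≤ c) (ht : aval p c < t) :
    0 < dval p c t := by
  rw [dval_factor p c t hp hc]
  have hs := Real.sqrt_nonneg ((c - 2*p + 1)^2 + 16*c*p)
  have : ((c + 2*p - 3) - Real.sqrt ((c - 2*p + 1)^2 + 16*c*p)) / 2 ≤ aval p c := by
    unfold aval; linarith
  nlinarith

lemma gval_at_aval_neg (p c : ℝ) (hp : 2 ≤ p) (hc : 1 ≤ c) : gval p c (aval p c) < 0 := by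
  have h0 : dval p c (aval p c) = 0 := by
    rw [dval_factor p c _ hp hc]; ring
  have ha := aval_pos p c hp hc
  have : gval p c (aval p c)
      = (aval p c - p + 1) * dval p c (aval p c) - c*p*(aval p c + 2) - p^2*(aval p c + c + 1) := by
    unfold gval dval; ring
  rw [this, h0]
  have h1 : 0 < c*p*(aval p c + 2) := by
    apply mul_pos (mul_pos (by linarith) (by linarith)); linarith
  have h2 : 0 < p^2*(aval p c + c + 1) := by
    apply mul_pos (by positivity); linarith
  linarith

lemma gval_at_M_pos (p c : ℝ) (hp : 2 ≤ p) (hc : 1 ≤ c) : 0 < gval p c (5*(2*p+c)) := by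
  unfold gval
  nlinarith [sq_nonneg (p - c), sq_nonneg (p + c), mul_pos (by linarith : (0:ℝ) < p) (by linarith : (0:ℝ) < c), sq_nonneg p, sq_nonneg c]

lemma key_root (p c L : ℝ) (hp : 2 ≤ p) (hc : 1 ≤ c) (hL : gval p c L < 0)
    (haL : aval p c ≤ L) (hL5 : L ≤ 5*(2*p+c)) :
    ∃ r, L < r ∧ r < 5*(2*p+c) ∧ gval p c r = 0 ∧ 0 < dval p c r := by
  have hcont : ContinuousOn (gval p c) (Set.Icc L (5*(2*p+c))) := by
    apply Continuous.continuousOn; unfold gval; continuity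
  have hM := gval_at_M_pos p c hp hc
  have h0 : (0:ℝ) ∈ Set.Icc (gval p c L) (gval p c (5*(2*p+c))) :=
    ⟨le_of_lt hL, le_of_lt hM⟩
  obtain ⟨r, hrmem, hr⟩ := intermediate_value_Icc hL5 hcont h0
  refine ⟨r, ?_, ?_, hr, ?_⟩
  · rcases lt_or_eq_of_le hrmem.1 with h | h
    · exact h
    · exfalso; rw [← h] at hr; linarith
  · rcases lt_or_eq_of_le hrmem.2 with h | h
    · exact h
    · exfalso; rw [h] at hr; linarith
  · apply dval_pos p c r hp hc
    rcases lt_or_eq_of_le hrmem.1 with h | h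
    · linarith
    · exfalso; rw [← h] at hr; linarith

lemma t_lower (p c t N : ℝ) (hp : 2 ≤ p) (hc : 1 ≤ c) (hN : N = 2*p + c)
    (hN8 : 8*p ≤ N) (hd : 0 < dval p c t) (h2t : N - 3 ≤ 2*t) : N + p - 2 ≤ t := by
  by_contra h
  push_neg at h
  unfold dval at hd
  nlinarith [mul_pos (by linarith : (0:ℝ) < N + p - 2 - t) (by linarith : (0:ℝ) < t + p + 1)]

lemma gs_neg (d s N t : ℝ) (hd : 2 ≤ d) (hs : d + 1 ≤ s) (hn : 2*s + 1 ≤ N)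
    (hN8 : 8*d ≤ N) (ht : N + d - 2 ≤ t) (hgd : gval d (N - 2*d) t = 0) :
    gval s (N - 2*s) t < 0 := by
  have hid : gval s (N - 2*s) t = gval d (N - 2*d) t + (s - d) *
      (-t - t^2 - 2*N - 2*N*t + 5*d + 5*d*t + d*N - 2*d^2 + 5*s + 5*s*t + s*N - 2*s*d - 2*s^2) := by
    unfold gval; ring
  rw [hid, hgd, zero_add]
  have hQ : (-t - t^2 - 2*N - 2*N*t + 5*d + 5*d*t + d*N - 2*d^2 + 5*s + 5*s*t + s*N - 2*s*d - 2*s^2) < 0 := by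
    nlinarith [mul_nonneg (by linarith : (0:ℝ) ≤ t - (N + d - 2))
        (by nlinarith : (0:ℝ) ≤ t + (N + d - 2) - (5*d + 5*s - 2*N - 1)),
      sq_nonneg (N - 2*s - 1), sq_nonneg (N - 8*d)]
  nlinarith

/-- From a root of the cubic with positive minor, build a positive quotient eigenvector. -/
lemma eig_of_root (p c r : ℝ) (hp : 2 ≤ p) (hc : 1 ≤ c) (hr : 0 < r)
    (hg : gval p c r = 0) (hdv : 0 < dval p c r) :
    ∃ x y z : ℝ, 0 < x ∧ 0 < y ∧ 0 < z ∧
      (p-1)*x + c*y + p*z = r*x ∧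
      p*x + (c-1)*y + 2*p*z = r*y ∧
      p*x + 2*c*y + (2*p-2)*z = r*z := by
  have hd0 : dval p c r ≠ 0 := ne_of_gt hdv
  refine ⟨1, p*(r+2)/dval p c r, p*(r+c+1)/dval p c r, one_pos, ?_, ?_, ?_, ?_, ?_⟩
  · apply div_pos (by nlinarith) hdv
  · apply div_pos (by nlinarith) hdv
  · have e : (p-1)*1 + c*(p*(r+2)/dval p c r) + p*(p*(r+c+1)/dval p c r)
        = r*1 - gval p c r / dval p c r := by
      field_simp
      unfold gval dval
      ring
    rw [e, hg]; simp
  · field_simp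
    unfold dval
    ring
  · field_simp
    unfold dval
    ring

/-- The main real-analysis result: the two spectral radii as roots, with `t < r`. -/
lemma exists_roots (d s N : ℝ) (hd : 2 ≤ d) (hs : d + 1 ≤ s) (hn : 2*s + 1 ≤ N)
    (hN8 : 8*d ≤ N) :
    ∃ t r : ℝ, t < r ∧ 0 < t ∧ 0 < r ∧
      gval d (N - 2*d) t = 0 ∧ 0 < dval d (N - 2*d) t ∧
      gval s (N - 2*s) r = 0 ∧ 0 < dval s (N - 2*s) r := by
  have hs2 : 2 ≤ s := by linarith
  have hc1 : 1 ≤ N - 2*d := by linarith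
  have hc2 : 1 ≤ N - 2*s := by linarith
  have hid1 : 5*(2*d + (N - 2*d)) = 5*N := by ring
  have hid2 : 5*(2*s + (N - 2*s)) = 5*N := by ring
  -- root for the δ-graph
  obtain ⟨t, htL, htM, hgt, hdt⟩ := key_root d (N - 2*d) (aval d (N - 2*d)) hd hc1
    (gval_at_aval_neg d (N - 2*d) hd hc1) le_rfl (aval_ub d (N - 2*d) hd hc1)
  rw [hid1] at htM
  have havlb := aval_lb d (N - 2*d) hd hc1
  have ht0 : 0 < t := by linarith
  have htlow : N + d - 2 ≤ t :=
    t_lower d (N - 2*d) t N hd hc1 (by ring) hN8 hdt (by linarith)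
  have hgs : gval s (N - 2*s) t < 0 := gs_neg d s N t hd hs hn hN8 htlow hgt
  -- root for the s-graph
  have havub2 := aval_ub s (N - 2*s) hs2 hc2
  rw [hid2] at havub2
  have hL1 : gval s (N - 2*s) (max (aval s (N - 2*s)) t) < 0 := by
    rcases le_total t (aval s (N - 2*s)) with h | h
    · rw [max_eq_left h]; exact gval_at_aval_neg s (N - 2*s) hs2 hc2
    · rw [max_eq_right h]; exact hgs
  obtain ⟨r, hrL, hrM, hgr, hdr⟩ := key_root s (N - 2*s) (max (aval s (N - 2*s)) t) hs2 hc2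
    hL1 (le_max_left _ _) (by rw [hid2]; exact max_le havub2 (le_of_lt htM))
  have htr : t < r := lt_of_le_of_lt (le_max_right _ _) hrL
  exact ⟨t, r, htr, ht0, by linarith, hgt, hdt, hgr, hdr⟩

/-! ### Graph distance and spectral lemmas -/

/-- The graph `K_s ∨ (K_c + s K₁)`. -/
abbrev Gsc (s c : ℕ) : SimpleGraph (Fin s ⊕ (Fin c ⊕ Fin s)) :=
  graphJoin (⊤ : SimpleGraph (Fin s)) (graphSum (⊤ : SimpleGraph (Fin c)) (⊥ : SimpleGraph (Fin s)))

section dists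
variable {s c : ℕ}

lemma Gsc_adj_ll (a a' : Fin s) : (Gsc s c).Adj (Sum.inl a) (Sum.inl a') ↔ a ≠ a' := by
  simp [Gsc, graphJoin]

lemma Gsc_adj_lr (a : Fin s) (b : Fin c ⊕ Fin s) :
    (Gsc s c).Adj (Sum.inl a) (Sum.inr b) := by
  simp [Gsc, graphJoin]

lemma Gsc_adj_rl (a : Fin s) (b : Fin c ⊕ Fin s) :
    (Gsc s c).Adj (Sum.inr b) (Sum.inl a) := by
  simp [Gsc, graphJoin]

lemma Gsc_adj_rr (b b' : Fin c ⊕ Fin s) :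
    (Gsc s c).Adj (Sum.inr b) (Sum.inr b') ↔
      (∃ x x', b = Sum.inl x ∧ b' = Sum.inl x' ∧ x ≠ x') := by
  rcases b with x | x <;> rcases b' with x' | x' <;>
    simp [Gsc, graphJoin, graphSum]

lemma Gsc_dist_one {u v : Fin s ⊕ (Fin c ⊕ Fin s)} (h : (Gsc s c).Adj u v) :
    (Gsc s c).dist u v = 1 := SimpleGraph.dist_eq_one_iff_adj.2 h

lemma Gsc_dist_two (hs : 0 < s) {u v : Fin s ⊕ (Fin c ⊕ Fin s)}
    (hne : u ≠ v) (hna : ¬ (Gsc s c).Adj u v)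
    (b b' : Fin c ⊕ Fin s) (hu : u = Sum.inr b) (hv : v = Sum.inr b') :
    (Gsc s c).dist u v = 2 := by
  subst hu hv
  have h1 : (Gsc s c).Adj (Sum.inr b) (Sum.inl ⟨0, hs⟩) := Gsc_adj_rl _ _
  have h2 : (Gsc s c).Adj (Sum.inl ⟨0, hs⟩) (Sum.inr b') := Gsc_adj_lr _ _
  have hw : (Gsc s c).dist (Sum.inr b) (Sum.inr b') ≤ 2 := by
    have := SimpleGraph.dist_le (SimpleGraph.Walk.cons h1 (SimpleGraph.Walk.cons h2 SimpleGraph.Walk.nil))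
    simpa using this
  have hreach : (Gsc s c).Reachable (Sum.inr b) (Sum.inr b') :=
    ⟨SimpleGraph.Walk.cons h1 (SimpleGraph.Walk.cons h2 SimpleGraph.Walk.nil)⟩
  have h0 : 0 < (Gsc s c).dist (Sum.inr b) (Sum.inr b') :=
    hreach.pos_dist_of_ne hne
  have hno : (Gsc s c).dist (Sum.inr b) (Sum.inr b') ≠ 1 := by
    intro h; exact hna (SimpleGraph.dist_eq_one_iff_adj.1 h)
  omega

end dists

lemma distSpecRad_eq_of_posEigen {V : Type*} [Fintype V] [Nonempty V] (G : SimpleGraph V)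
    (ρ : ℝ) (w : V → ℝ) (hw : ∀ i, 0 < w i)
    (hmul : (distMatrix G).mulVec w = ρ • w) : distSpecRad G = ρ := by
  have hD0 : ∀ i j, 0 ≤ distMatrix G i j := fun i j => Nat.cast_nonneg _
  have hDsymm : ∀ i j, distMatrix G i j = distMatrix G j i := fun i j => by
    simp [distMatrix, SimpleGraph.dist_comm]
  apply IsGreatest.csSup_eq
  constructor
  · refine ⟨w, ?_, hmul⟩
    intro h
    have := hw (Classical.arbitrary V)
    rw [h] at this
    exact lt_irrefl _ this
  · rintro μ ⟨v, hv0, hμ⟩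
    set u : V → ℝ := fun i => |v i| with hu
    have key1 : ∀ i, |μ| * u i ≤ ∑ j, distMatrix G i j * u j := by
      intro i
      have h1 : (distMatrix G).mulVec v i = μ * v i := by
        rw [hμ]; rfl
      have h2 : |μ| * u i = |∑ j, distMatrix G i j * v j| := by
        rw [← abs_mul, ← h1]; rfl
      rw [h2]
      refine le_trans (Finset.abs_sum_le_sum_abs _ _) ?_
      apply Finset.sum_le_sum
      intro j _
      rw [abs_mul, abs_of_nonneg (hD0 i j)]
    set S : ℝ := ∑ i, w i * u i with hS
    have hSpos : 0 < S := by
      obtain ⟨i0, hi0⟩ := Function.ne_iff.1 hv0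
      apply Finset.sum_pos'
      · intro i _; exact mul_nonneg (le_of_lt (hw i)) (abs_nonneg _)
      · exact ⟨i0, Finset.mem_univ _, mul_pos (hw i0) (abs_pos.2 hi0)⟩
    have key2 : ∑ i, w i * (∑ j, distMatrix G i j * u j) = ρ * S := by
      calc ∑ i, w i * (∑ j, distMatrix G i j * u j)
          = ∑ i, ∑ j, w i * (distMatrix G i j * u j) := by
            simp [Finset.mul_sum]
        _ = ∑ j, ∑ i, w i * (distMatrix G i j * u j) := Finset.sum_comm
        _ = ∑ j, (∑ i, distMatrix G j i * w i) * u j := by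
            apply Finset.sum_congr rfl
            intro j _
            rw [Finset.sum_mul]
            apply Finset.sum_congr rfl
            intro i _
            rw [hDsymm j i]; ring
        _ = ∑ j, (ρ * w j) * u j := by
            apply Finset.sum_congr rfl
            intro j _
            congr 1
            have : (distMatrix G).mulVec w j = ρ * w j := by rw [hmul]; rfl
            rw [← this]; rfl
        _ = ρ * S := by rw [hS, Finset.mul_sum]; apply Finset.sum_congr rfl; intros; ring
    have key3 : |μ| * S ≤ ρ * S := by
      rw [← key2, hS, Finset.mul_sum]
      apply Finset.sum_le_sum
      intro i _
      calc |μ| * (w i * u i) = w i * (|μ| * u i) := by ring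
        _ ≤ w i * (∑ j, distMatrix G i j * u j) :=
            mul_le_mul_of_nonneg_left (key1 i) (le_of_lt (hw i))
    have : |μ| ≤ ρ := le_of_mul_le_mul_right key3 hSpos
    exact le_trans (le_abs_self μ) this

section quotient
variable (s c : ℕ)

lemma sum_ite_off (s' : ℕ) (a : Fin s') : ∑ a' : Fin s', (if a = a' then (0:ℝ) else 1) = (s':ℝ) - 1 := by
  have h : ∀ a' : Fin s', (if a = a' then (0:ℝ) else 1) = 1 - (if a = a' then (1:ℝ) else 0) := by
    intro a'; split_ifs <;> ring
  rw [Finset.sum_congr rfl (fun a' _ => h a')]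
  rw [Finset.sum_sub_distrib, Finset.sum_ite_eq]
  simp

lemma distSpecRad_Gsc (hs : 0 < s) (hc : 0 < c) (ρ x y z : ℝ)
    (hx : 0 < x) (hy : 0 < y) (hz : 0 < z)
    (E1 : ((s:ℝ)-1)*x + (c:ℝ)*y + (s:ℝ)*z = ρ*x)
    (E2 : (s:ℝ)*x + ((c:ℝ)-1)*y + 2*(s:ℝ)*z = ρ*y)
    (E3 : (s:ℝ)*x + 2*(c:ℝ)*y + (2*(s:ℝ)-2)*z = ρ*z) :
    distSpecRad (Gsc s c) = ρ := by
  haveI : Nonempty (Fin s ⊕ (Fin c ⊕ Fin s)) := ⟨Sum.inl ⟨0, hs⟩⟩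
  set w : (Fin s ⊕ (Fin c ⊕ Fin s)) → ℝ :=
    Sum.elim (fun _ => x) (Sum.elim (fun _ => y) (fun _ => z)) with hwdef
  have hw : ∀ i, 0 < w i := by rintro (a | b | e) <;> simpa [hwdef]
  -- distance matrix entries
  have dll : ∀ a a' : Fin s, distMatrix (Gsc s c) (Sum.inl a) (Sum.inl a')
      = if a = a' then 0 else 1 := by
    intro a a'
    by_cases h : a = a'
    · subst h; simp [distMatrix]
    · simp only [distMatrix, if_neg h]
      rw [Gsc_dist_one ((Gsc_adj_ll a a').2 h)]; norm_num
  have dlr : ∀ (a : Fin s) (b : Fin c ⊕ Fin s),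
      distMatrix (Gsc s c) (Sum.inl a) (Sum.inr b) = 1 := by
    intro a b
    simp only [distMatrix]
    rw [Gsc_dist_one (Gsc_adj_lr a b)]; norm_num
  have drl : ∀ (a : Fin s) (b : Fin c ⊕ Fin s),
      distMatrix (Gsc s c) (Sum.inr b) (Sum.inl a) = 1 := by
    intro a b
    simp only [distMatrix]
    rw [Gsc_dist_one (Gsc_adj_rl a b)]; norm_num
  have dcc : ∀ b b' : Fin c, distMatrix (Gsc s c) (Sum.inr (Sum.inl b)) (Sum.inr (Sum.inl b'))
      = if b = b' then 0 else 1 := by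
    intro b b'
    by_cases h : b = b'
    · subst h; simp [distMatrix]
    · simp only [distMatrix, if_neg h]
      rw [Gsc_dist_one]
      · norm_num
      · exact (Gsc_adj_rr _ _).2 ⟨b, b', rfl, rfl, h⟩
  have dci : ∀ (b : Fin c) (e : Fin s),
      distMatrix (Gsc s c) (Sum.inr (Sum.inl b)) (Sum.inr (Sum.inr e)) = 2 := by
    intro b e
    simp only [distMatrix]
    rw [Gsc_dist_two hs (by simp) (by rw [Gsc_adj_rr]; rintro ⟨x', y', hx', hy', _⟩; simp at hy')
      _ _ rfl rfl]
    norm_num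
  have dic : ∀ (b : Fin c) (e : Fin s),
      distMatrix (Gsc s c) (Sum.inr (Sum.inr e)) (Sum.inr (Sum.inl b)) = 2 := by
    intro b e
    simp only [distMatrix]
    rw [Gsc_dist_two hs (by simp) (by rw [Gsc_adj_rr]; rintro ⟨x', y', hx', hy', _⟩; simp at hx')
      _ _ rfl rfl]
    norm_num
  have dii : ∀ e e' : Fin s, distMatrix (Gsc s c) (Sum.inr (Sum.inr e)) (Sum.inr (Sum.inr e'))
      = if e = e' then 0 else 2 := by
    intro e e'
    by_cases h : e = e'
    · subst h; simp [distMatrix]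
    · simp only [distMatrix, if_neg h]
      rw [Gsc_dist_two hs (by simp [h]) (by rw [Gsc_adj_rr]; rintro ⟨x', y', hx', hy', _⟩; simp at hx')
        _ _ rfl rfl]
      norm_num
  have hmul : (distMatrix (Gsc s c)).mulVec w = ρ • w := by
    funext i
    have expand : ∀ i, (distMatrix (Gsc s c)).mulVec w i =
        (∑ a' : Fin s, distMatrix (Gsc s c) i (Sum.inl a') * x)
        + ((∑ b' : Fin c, distMatrix (Gsc s c) i (Sum.inr (Sum.inl b')) * y)
          + (∑ e' : Fin s, distMatrix (Gsc s c) i (Sum.inr (Sum.inr e')) * z)) := by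
      intro i
      simp only [Matrix.mulVec, dotProduct, Fintype.sum_sum_type, hwdef,
        Sum.elim_inl, Sum.elim_inr]
    rcases i with a | b | e
    · rw [expand]
      have h1 : ∑ a' : Fin s, distMatrix (Gsc s c) (Sum.inl a) (Sum.inl a') * x
          = ((s:ℝ) - 1) * x := by
        rw [← Finset.sum_mul]
        congr 1
        rw [Finset.sum_congr rfl (fun a' _ => by rw [dll a a'])]
        exact sum_ite_off s a
      rw [h1]
      simp only [dlr, one_mul, Finset.sum_const, Finset.card_univ, Fintype.card_fin,
        nsmul_eq_mul]
      show ((s:ℝ)-1)*x + ((c:ℝ)*y + (s:ℝ)*z) = ρ * w (Sum.inl a)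
      simp only [hwdef, Sum.elim_inl]
      linarith [E1]
    · rw [expand]
      have h2 : ∑ b' : Fin c, distMatrix (Gsc s c) (Sum.inr (Sum.inl b)) (Sum.inr (Sum.inl b')) * y
          = ((c:ℝ) - 1) * y := by
        rw [← Finset.sum_mul]
        congr 1
        rw [Finset.sum_congr rfl (fun b' _ => by rw [dcc b b'])]
        exact sum_ite_off c b
      rw [h2]
      simp only [drl, dci, one_mul, Finset.sum_const, Finset.card_univ, Fintype.card_fin,
        nsmul_eq_mul]
      show (s:ℝ)*x + (((c:ℝ)-1)*y + (s:ℝ)*(2*z)) = ρ * w (Sum.inr (Sum.inl b))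
      simp only [hwdef, Sum.elim_inr, Sum.elim_inl]
      linarith [E2]
    · rw [expand]
      have h3 : ∑ e' : Fin s, distMatrix (Gsc s c) (Sum.inr (Sum.inr e)) (Sum.inr (Sum.inr e')) * z
          = (2*(s:ℝ) - 2) * z := by
        rw [← Finset.sum_mul]
        congr 1
        have : ∀ e' : Fin s, distMatrix (Gsc s c) (Sum.inr (Sum.inr e)) (Sum.inr (Sum.inr e'))
            = 2 * (if e = e' then 0 else 1) := by
          intro e'; rw [dii e e']; split_ifs <;> ring
        rw [Finset.sum_congr rfl (fun e' _ => this e'), ← Finset.mul_sum, sum_ite_off s e]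
        ring
      rw [h3]
      simp only [drl, dic, one_mul, Finset.sum_const, Finset.card_univ, Fintype.card_fin,
        nsmul_eq_mul]
      show (s:ℝ)*x + ((c:ℝ)*(2*y) + (2*(s:ℝ)-2)*z) = ρ * w (Sum.inr (Sum.inr e))
      simp only [hwdef, Sum.elim_inr]
      linarith [E3]
  exact distSpecRad_eq_of_posEigen _ ρ w hw hmul

end quotient


theorem stmt8 (δ s n : ℕ) (hδ : 2 ≤ δ) (hs : δ + 1 ≤ s) (hs2 : 2 * s + 1 ≤ n)
    (hn : 8 * δ ≤ n) :
    distSpecRad (graphJoin (⊤ : SimpleGraph (Fin δ))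
        (graphSum (⊤ : SimpleGraph (Fin (n - 2 * δ))) (⊥ : SimpleGraph (Fin δ))))
      < distSpecRad (graphJoin (⊤ : SimpleGraph (Fin s))
        (graphSum (⊤ : SimpleGraph (Fin (n - 2 * s))) (⊥ : SimpleGraph (Fin s)))) := by
  have hcast1 : ((n - 2*δ : ℕ) : ℝ) = (n : ℝ) - 2*(δ : ℝ) := by
    have : 2*δ ≤ n := by omega
    push_cast [Nat.cast_sub this]
    ring
  have hcast2 : ((n - 2*s : ℕ) : ℝ) = (n : ℝ) - 2*(s : ℝ) := by
    have : 2*s ≤ n := by omega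
    push_cast [Nat.cast_sub this]
    ring
  have hd' : (2:ℝ) ≤ (δ:ℝ) := by exact_mod_cast hδ
  have hs' : (δ:ℝ) + 1 ≤ (s:ℝ) := by exact_mod_cast hs
  have hn' : 2*(s:ℝ) + 1 ≤ (n:ℝ) := by exact_mod_cast hs2
  have hN8' : 8*(δ:ℝ) ≤ (n:ℝ) := by exact_mod_cast hn
  obtain ⟨t, r, htr, ht0, hr0, hgt, hdt, hgr, hdr⟩ :=
    exists_roots (δ:ℝ) (s:ℝ) (n:ℝ) hd' hs' hn' hN8'
  obtain ⟨x₁, y₁, z₁, hx₁, hy₁, hz₁, hE1, hE2, hE3⟩ :=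
    eig_of_root (δ:ℝ) ((n:ℝ) - 2*(δ:ℝ)) t hd' (by linarith) ht0 hgt hdt
  obtain ⟨x₂, y₂, z₂, hx₂, hy₂, hz₂, hF1, hF2, hF3⟩ :=
    eig_of_root (s:ℝ) ((n:ℝ) - 2*(s:ℝ)) r (by linarith) (by linarith) hr0 hgr hdr
  have e1 : distSpecRad (Gsc δ (n - 2*δ)) = t := by
    apply distSpecRad_Gsc δ (n - 2*δ) (by omega) (by omega) t x₁ y₁ z₁ hx₁ hy₁ hz₁
    · rw [hcast1]; linarith [hE1]
    · rw [hcast1]; linarith [hE2]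
    · rw [hcast1]; linarith [hE3]
  have e2 : distSpecRad (Gsc s (n - 2*s)) = r := by
    apply distSpecRad_Gsc s (n - 2*s) (by omega) (by omega) r x₂ y₂ z₂ hx₂ hy₂ hz₂
    · rw [hcast2]; linarith [hF1]
    · rw [hcast2]; linarith [hF2]
    · rw [hcast2]; linarith [hF3]
  calc distSpecRad (graphJoin (⊤ : SimpleGraph (Fin δ))
        (graphSum (⊤ : SimpleGraph (Fin (n - 2 * δ))) (⊥ : SimpleGraph (Fin δ)))) = t := e1
    _ < r := htr
    _ = distSpecRad (graphJoin (⊤ : SimpleGraph (Fin s))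
        (graphSum (⊤ : SimpleGraph (Fin (n - 2 * s))) (⊥ : SimpleGraph (Fin s)))) := e2.symm
end

section
/- Let δ ≥ 2 be an integer and n ≥ 8δ. Then λ₁(D(K_δ ∨ (K_{n−2δ} + δK₁))) > n + δ. -/
open SimpleGraph Finset

section Graph
variable (δ m : ℕ)

abbrev Vt := Fin δ ⊕ (Fin m ⊕ Fin δ)

def Gg : SimpleGraph (Vt δ m) :=
  graphJoin (⊤ : SimpleGraph (Fin δ)) (graphSum (⊤ : SimpleGraph (Fin m)) (⊥ : SimpleGraph (Fin δ)))

variable {δ m}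

lemma adj_AA (a a' : Fin δ) : (Gg δ m).Adj (.inl a) (.inl a') ↔ a ≠ a' := Iff.rfl
lemma adj_AB (a : Fin δ) (x : Fin m ⊕ Fin δ) : (Gg δ m).Adj (.inl a) (.inr x) := trivial
lemma adj_BA (a : Fin δ) (x : Fin m ⊕ Fin δ) : (Gg δ m).Adj (.inr x) (.inl a) := trivial
lemma adj_BB (b b' : Fin m) : (Gg δ m).Adj (.inr (.inl b)) (.inr (.inl b')) ↔ b ≠ b' := Iff.rfl
lemma adj_BC (b : Fin m) (c : Fin δ) : ¬ (Gg δ m).Adj (.inr (.inl b)) (.inr (.inr c)) := id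
lemma adj_CB (b : Fin m) (c : Fin δ) : ¬ (Gg δ m).Adj (.inr (.inr c)) (.inr (.inl b)) := id
lemma adj_CC (c c' : Fin δ) : ¬ (Gg δ m).Adj (.inr (.inr c)) (.inr (.inr c')) := fun h => h.elim

variable (hδ : 0 < δ)

lemma dist_two (u w : Vt δ m) (hne : u ≠ w) (hnadj : ¬ (Gg δ m).Adj u w)
    (h1 : (Gg δ m).Adj u (.inl ⟨0, hδ⟩)) (h2 : (Gg δ m).Adj (.inl ⟨0, hδ⟩) w) :
    (Gg δ m).dist u w = 2 := by
  have hle : (Gg δ m).dist u w ≤ 2 := by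
    simpa using SimpleGraph.dist_le (SimpleGraph.Walk.cons h1 (SimpleGraph.Walk.cons h2 SimpleGraph.Walk.nil))
  have h0 : (Gg δ m).dist u w ≠ 0 :=
    SimpleGraph.dist_ne_zero_iff_ne_and_reachable.2
      ⟨hne, (SimpleGraph.Walk.cons h1 (SimpleGraph.Walk.cons h2 SimpleGraph.Walk.nil)).reachable⟩
  have h1' : (Gg δ m).dist u w ≠ 1 := fun h => hnadj (SimpleGraph.dist_eq_one_iff_adj.1 h)
  omega

lemma dAA (a a' : Fin δ) : (Gg δ m).dist (.inl a) (.inl a') = if a = a' then 0 else 1 := by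
  split
  · simp [*]
  · exact SimpleGraph.dist_eq_one_iff_adj.2 ((adj_AA a a').2 (by assumption))

lemma dAB (a : Fin δ) (x : Fin m ⊕ Fin δ) : (Gg δ m).dist (.inl a) (.inr x) = 1 :=
  SimpleGraph.dist_eq_one_iff_adj.2 (adj_AB a x)

lemma dBA (a : Fin δ) (x : Fin m ⊕ Fin δ) : (Gg δ m).dist (.inr x) (.inl a) = 1 :=
  SimpleGraph.dist_eq_one_iff_adj.2 (adj_BA a x)

lemma dBB (b b' : Fin m) : (Gg δ m).dist (.inr (.inl b)) (.inr (.inl b')) = if b = b' then 0 else 1 := by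
  split
  · simp [*]
  · exact SimpleGraph.dist_eq_one_iff_adj.2 ((adj_BB b b').2 (by assumption))

include hδ

lemma dBC (b : Fin m) (c : Fin δ) : (Gg δ m).dist (.inr (.inl b)) (.inr (.inr c)) = 2 :=
  dist_two hδ _ _ (by simp) (adj_BC b c) (adj_BA _ _) (adj_AB _ _)

lemma dCB (b : Fin m) (c : Fin δ) : (Gg δ m).dist (.inr (.inr c)) (.inr (.inl b)) = 2 :=
  dist_two hδ _ _ (by simp) (adj_CB b c) (adj_BA _ _) (adj_AB _ _)

lemma dCC (c c' : Fin δ) : (Gg δ m).dist (.inr (.inr c)) (.inr (.inr c')) = if c = c' then 0 else 2 := by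
  split
  · simp [*]
  · exact dist_two hδ _ _ (by simp [*]) (adj_CC c c') (adj_BA _ _) (adj_AB _ _)

end Graph

open RealInnerProductSpace

lemma sum_if_ne {k : ℕ} (a : Fin k) (c : ℝ) :
    ∑ a' : Fin k, (if a = a' then 0 else c) = k * c - c := by
  have h : ∀ a' : Fin k, (if a = a' then (0:ℝ) else c) = c - (if a = a' then c else 0) := by
    intro a'; split <;> ring
  rw [Finset.sum_congr rfl fun a' _ => h a', Finset.sum_sub_distrib, Finset.sum_const,
    Finset.sum_ite_eq]
  simp [Finset.card_univ, mul_comm]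

noncomputable def xx (δ m : ℕ) : EuclideanSpace ℝ (Vt δ m) :=
  WithLp.toLp 2 fun v => Sum.elim (fun _ => (1:ℝ)) (Sum.elim (fun _ => (1:ℝ)) (fun _ => (2:ℝ))) v

section Comp
variable {δ m : ℕ} (hδ : 0 < δ)

lemma dm_AA (a a' : Fin δ) :
    distMatrix (Gg δ m) (.inl a) (.inl a') = if a = a' then 0 else 1 := by
  simp [distMatrix, dAA]

lemma dm_AB (a : Fin δ) (x : Fin m ⊕ Fin δ) :
    distMatrix (Gg δ m) (.inl a) (.inr x) = 1 := by simp [distMatrix, dAB]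

lemma dm_BA (a : Fin δ) (x : Fin m ⊕ Fin δ) :
    distMatrix (Gg δ m) (.inr x) (.inl a) = 1 := by simp [distMatrix, dBA]

lemma dm_BB (b b' : Fin m) :
    distMatrix (Gg δ m) (.inr (.inl b)) (.inr (.inl b')) = if b = b' then 0 else 1 := by
  simp [distMatrix, dBB]

include hδ

lemma dm_BC (b : Fin m) (c : Fin δ) :
    distMatrix (Gg δ m) (.inr (.inl b)) (.inr (.inr c)) = 2 := by
  simp [distMatrix, dBC hδ]

lemma dm_CB (b : Fin m) (c : Fin δ) :
    distMatrix (Gg δ m) (.inr (.inr c)) (.inr (.inl b)) = 2 := by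
  simp [distMatrix, dCB hδ]

lemma dm_CC (c c' : Fin δ) :
    distMatrix (Gg δ m) (.inr (.inr c)) (.inr (.inr c')) = if c = c' then 0 else 2 := by
  simp [distMatrix, dCC hδ]

omit hδ in
lemma mulVec_A (a : Fin δ) :
    (distMatrix (Gg δ m)).mulVec (xx δ m) (.inl a) = m + 3*δ - 1 := by
  simp only [Matrix.mulVec, dotProduct, Fintype.sum_sum_type, xx, WithLp.ofLp_toLp,
    dm_AA, dm_AB, Sum.elim_inl, Sum.elim_inr, mul_one]
  rw [sum_if_ne]
  simp [Finset.sum_const, Finset.card_univ]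
  ring

lemma mulVec_B (b : Fin m) :
    (distMatrix (Gg δ m)).mulVec (xx δ m) (.inr (.inl b)) = m + 5*δ - 1 := by
  simp only [Matrix.mulVec, dotProduct, Fintype.sum_sum_type, xx, WithLp.ofLp_toLp,
    dm_BA, dm_BB, dm_BC hδ, Sum.elim_inl, Sum.elim_inr, mul_one]
  rw [sum_if_ne]
  simp [Finset.sum_const, Finset.card_univ]
  ring

lemma mulVec_C (c : Fin δ) :
    (distMatrix (Gg δ m)).mulVec (xx δ m) (.inr (.inr c)) = 2*m + 5*δ - 4 := by
  simp only [Matrix.mulVec, dotProduct, Fintype.sum_sum_type, xx, WithLp.ofLp_toLp,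
    dm_BA, dm_CB hδ, dm_CC hδ, Sum.elim_inl, Sum.elim_inr, mul_one]
  have h : ∀ c' : Fin δ, (if c = c' then (0:ℝ) else 2) * 2 = if c = c' then 0 else 4 := by
    intro c'; split <;> ring
  rw [Finset.sum_congr rfl fun c' _ => h c', sum_if_ne]
  simp [Finset.sum_const, Finset.card_univ]
  ring

end Comp

section Comp2
variable {δ m : ℕ} (hδ : 0 < δ)

include hδ in
lemma xx_ne_zero : xx δ m ≠ 0 := by
  intro h
  have := congrFun (congrArg WithLp.ofLp h) (Sum.inl ⟨0, hδ⟩ : Vt δ m)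
  simp [xx] at this

lemma toEuc_apply (i : Vt δ m) (y : EuclideanSpace ℝ (Vt δ m)) :
    Matrix.toEuclideanLin (distMatrix (Gg δ m)) y i = (distMatrix (Gg δ m)).mulVec y i := rfl

include hδ in
lemma inner_Q :
    ⟪Matrix.toEuclideanLin (distMatrix (Gg δ m)) (xx δ m), xx δ m⟫ =
      (δ:ℝ)*((m:ℝ)+3*δ-1) + (m:ℝ)*((m:ℝ)+5*δ-1) + 2*(δ:ℝ)*(2*(m:ℝ)+5*δ-4) := by
  rw [PiLp.inner_apply]
  simp only [RCLike.inner_apply, starRingEnd_apply, star_trivial]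
  rw [Fintype.sum_sum_type, Fintype.sum_sum_type]
  simp only [toEuc_apply, mulVec_A, mulVec_B hδ, mulVec_C hδ]
  simp [xx, Finset.sum_const, Finset.card_univ]
  ring

lemma norm_xx_sq : ‖xx δ m‖^2 = (m:ℝ) + 5*δ := by
  rw [← real_inner_self_eq_norm_sq, PiLp.inner_apply]
  simp only [RCLike.inner_apply, starRingEnd_apply, star_trivial]
  rw [Fintype.sum_sum_type, Fintype.sum_sum_type]
  simp [xx, Finset.sum_const, Finset.card_univ]
  ring

end Comp2


theorem stmt9 (δ n : ℕ) (hδ : 2 ≤ δ) (hn : 8 * δ ≤ n) :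
    (n : ℝ) + (δ : ℝ) <
      distSpecRad (graphJoin (⊤ : SimpleGraph (Fin δ))
        (graphSum (⊤ : SimpleGraph (Fin (n - 2 * δ))) (⊥ : SimpleGraph (Fin δ)))) := by
  have hδ0 : 0 < δ := by omega
  set m := n - 2*δ with hm_def
  have hm : 6*δ ≤ m := by omega
  have hmR : (6*δ : ℝ) ≤ (m:ℝ) := by exact_mod_cast hm
  have hδR : (2:ℝ) ≤ (δ:ℝ) := by exact_mod_cast hδ
  have hn' : (n:ℝ) = (m:ℝ) + 2*δ := by
    have h : n = m + 2*δ := by omega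
    rw [h]; push_cast; ring
  show (n:ℝ) + δ < distSpecRad (Gg δ m)
  set D := distMatrix (Gg δ m) with hD
  set T := Matrix.toEuclideanLin D with hT_def
  have hHerm : D.IsHermitian := by
    ext i j
    simp [hD, Matrix.conjTranspose_apply, distMatrix, SimpleGraph.dist_comm]
  have hSym := Matrix.isHermitian_iff_isSymmetric.1 hHerm
  haveI : Nonempty (Vt δ m) := ⟨.inl ⟨0, hδ0⟩⟩
  have hEig := hSym.hasEigenvalue_iSup_of_finiteDimensional
  set μ := ⨆ x : {x : EuclideanSpace ℝ (Vt δ m) // x ≠ 0},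
      RCLike.re ⟪T x, (x : EuclideanSpace ℝ (Vt δ m))⟫ /
        ‖(x : EuclideanSpace ℝ (Vt δ m))‖^2 with hμ_def
  obtain ⟨v, hv⟩ := hEig.exists_hasEigenvector
  have hvineq : T v = μ • v := hv.apply_eq_smul
  set S := {μ : ℝ | ∃ w : Vt δ m → ℝ, w ≠ 0 ∧ D.mulVec w = μ • w} with hS
  have hmem : μ ∈ S := by
    refine ⟨v, (WithLp.ofLp_eq_zero (p := 2)).not.2 hv.right, ?_⟩
    funext i
    exact congrArg (fun x : EuclideanSpace ℝ (Vt δ m) => x.ofLp i) hvineq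
  set Tc := LinearMap.toContinuousLinearMap T with hTc
  have hTcT : ∀ x, Tc x = T x := fun x => rfl
  have hbddS : ∀ μ' ∈ S, μ' ≤ ‖Tc‖ := by
    rintro μ' ⟨w, hw0, hw⟩
    set we : EuclideanSpace ℝ (Vt δ m) := WithLp.toLp 2 w with hwe_def
    have hwe : T we = μ' • we := by ext i; exact congrFun hw i
    have hnorm : 0 < ‖we‖ := by
      rw [norm_pos_iff]; exact fun h => hw0 (congrArg WithLp.ofLp h)
    have h1 := Tc.le_opNorm we
    rw [hTcT, hwe, norm_smul] at h1
    have h2 : |μ'| ≤ ‖Tc‖ := by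
      have := (mul_le_mul_iff_left₀ hnorm).1 h1
      simpa using this
    exact le_trans (le_abs_self _) h2
  have hbddμ : BddAbove (Set.range fun x : {x : EuclideanSpace ℝ (Vt δ m) // x ≠ 0} =>
      RCLike.re ⟪T x, (x : EuclideanSpace ℝ (Vt δ m))⟫ /
        ‖(x : EuclideanSpace ℝ (Vt δ m))‖^2) := by
    refine ⟨‖Tc‖, ?_⟩
    rintro _ ⟨x, rfl⟩
    have hx : 0 < ‖(x : EuclideanSpace ℝ (Vt δ m))‖ := by
      rw [norm_pos_iff]; exact x.2
    have h2 : ⟪T x, (x : EuclideanSpace ℝ (Vt δ m))⟫ ≤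
        ‖T (x : EuclideanSpace ℝ (Vt δ m))‖ * ‖(x : EuclideanSpace ℝ (Vt δ m))‖ :=
      real_inner_le_norm _ _
    have h3 : ‖T (x : EuclideanSpace ℝ (Vt δ m))‖ ≤ ‖Tc‖ * ‖(x : EuclideanSpace ℝ (Vt δ m))‖ := by
      rw [← hTcT]; exact Tc.le_opNorm _
    have h4 : (0:ℝ) ≤ ‖Tc‖ := norm_nonneg _
    simp only [RCLike.re_to_real]
    rw [div_le_iff₀ (by positivity)]
    nlinarith
  have hray : ((δ:ℝ)*((m:ℝ)+3*δ-1) + (m:ℝ)*((m:ℝ)+5*δ-1) + 2*(δ:ℝ)*(2*(m:ℝ)+5*δ-4)) /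
      ((m:ℝ) + 5*δ) ≤ μ := by
    have h := le_ciSup hbddμ (⟨xx δ m, xx_ne_zero hδ0⟩ :
      {x : EuclideanSpace ℝ (Vt δ m) // x ≠ 0})
    rw [hμ_def]
    calc _ = RCLike.re ⟪T (xx δ m), xx δ m⟫ / ‖xx δ m‖^2 := by
            rw [hT_def, hD]
            simp only [RCLike.re_to_real]
            rw [inner_Q hδ0, norm_xx_sq]
      _ ≤ _ := h
  have hpos : (0:ℝ) < (m:ℝ) + 5*δ := by nlinarith
  have hfinal : (n:ℝ) + δ <
      ((δ:ℝ)*((m:ℝ)+3*δ-1) + (m:ℝ)*((m:ℝ)+5*δ-1) + 2*(δ:ℝ)*(2*(m:ℝ)+5*δ-4)) / ((m:ℝ) + 5*δ) := by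
    rw [hn', lt_div_iff₀ hpos]
    nlinarith
  have hsup : μ ≤ distSpecRad (Gg δ m) := le_csSup ⟨‖Tc‖, hbddS⟩ hmem
  linarith
end

section
/- Let δ ≥ 2 be an integer and n ≥ 2δ + 1. Then λ₁(D(K_δ ∨ (K_{n−2δ} + δK₁))) < λ₁(D(K₁ ∨ (K_{n−δ−1} + K_δ))). -/
open SimpleGraph Finset

section Aux
open Matrix
abbrev T1 (e m : ℕ) := Fin (e+1) ⊕ (Fin m ⊕ Fin (e+1))
abbrev T2 (e m : ℕ) := Fin 1 ⊕ (Fin (m+e) ⊕ Fin (e+1))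
abbrev G1 (e m : ℕ) : SimpleGraph (T1 e m) :=
  graphJoin (⊤ : SimpleGraph (Fin (e+1))) (graphSum (⊤ : SimpleGraph (Fin m)) (⊥ : SimpleGraph (Fin (e+1))))
abbrev G2 (e m : ℕ) : SimpleGraph (T2 e m) :=
  graphJoin (⊤ : SimpleGraph (Fin 1)) (graphSum (⊤ : SimpleGraph (Fin (m+e))) (⊤ : SimpleGraph (Fin (e+1))))

noncomputable def jm {α : Type*} [DecidableEq α] : α → α → ℝ := fun u v => if u = v then 0 else 1

def indC {α β γ : Type*} : (α ⊕ (β ⊕ γ)) → ℝ :=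
  Sum.elim (fun _ => 0) (Sum.elim (fun _ => 1) (fun _ => 0))
def indI {α β γ : Type*} : (α ⊕ (β ⊕ γ)) → ℝ :=
  Sum.elim (fun _ => 0) (Sum.elim (fun _ => 0) (fun _ => 1))
def ones {α : Type*} : α → ℝ := fun _ => 1

section DistLemmas

lemma dist_eq_two_of {V : Type*} (G : SimpleGraph V) {u v k : V}
    (hne : u ≠ v) (hnadj : ¬ G.Adj u v) (h1 : G.Adj u k) (h2 : G.Adj k v) :
    G.dist u v = 2 := by
  have hle : G.dist u v ≤ 2 := by
    simpa using SimpleGraph.dist_le (Walk.cons h1 (Walk.cons h2 Walk.nil))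
  have hne0 : G.dist u v ≠ 0 := by
    rw [Ne, SimpleGraph.dist_eq_zero_iff_eq_or_not_reachable]
    push_neg
    exact ⟨hne, ⟨Walk.cons h1 (Walk.cons h2 Walk.nil)⟩⟩
  have hne1 : G.dist u v ≠ 1 := by
    rw [Ne, SimpleGraph.dist_eq_one_iff_adj]
    exact hnadj
  omega

variable (e m : ℕ)

lemma G1_dist (u v : T1 e m) :
    ((G1 e m).dist u v : ℝ)
      = ones u * ones v * jm u v + indC u * indI v + indI u * indC v + indI u * indI v * jm u v := by
  rcases u with a | b | c <;> rcases v with a' | b' | c'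
  · by_cases h : a = a'
    · subst h; simp [jm, ones, indC, indI, SimpleGraph.dist_self]
    · rw [SimpleGraph.dist_eq_one_iff_adj.mpr (by exact h : (G1 e m).Adj (Sum.inl a) (Sum.inl a'))]
      simp [jm, ones, indC, indI, h]
  · rw [SimpleGraph.dist_eq_one_iff_adj.mpr (by trivial)]
    simp [jm, ones, indC, indI]
  · rw [SimpleGraph.dist_eq_one_iff_adj.mpr (by trivial)]
    simp [jm, ones, indC, indI]
  · rw [SimpleGraph.dist_eq_one_iff_adj.mpr (by trivial)]
    simp [jm, ones, indC, indI]
  · by_cases h : b = b'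
    · subst h; simp [jm, ones, indC, indI, SimpleGraph.dist_self]
    · rw [SimpleGraph.dist_eq_one_iff_adj.mpr (by exact h : (G1 e m).Adj _ _)]
      simp [jm, ones, indC, indI, h]
  · rw [dist_eq_two_of (G1 e m) (by simp) (by rintro ⟨⟩) (k := Sum.inl 0) (by trivial) (by trivial)]
    simp [jm, ones, indC, indI]
    norm_num
  · rw [SimpleGraph.dist_eq_one_iff_adj.mpr (by trivial)]
    simp [jm, ones, indC, indI]
  · rw [dist_eq_two_of (G1 e m) (by simp) (by rintro ⟨⟩) (k := Sum.inl 0) (by trivial) (by trivial)]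
    simp [jm, ones, indC, indI]
    norm_num
  · by_cases h : c = c'
    · subst h; simp [jm, ones, indC, indI, SimpleGraph.dist_self]
    · rw [dist_eq_two_of (G1 e m) (by simp [h]) (by rintro ⟨⟩) (k := Sum.inl 0) (by trivial) (by trivial)]
      simp [jm, ones, indC, indI, h]
      norm_num

lemma G2_dist (u v : T2 e m) :
    ((G2 e m).dist u v : ℝ) = ones u * ones v * jm u v + indC u * indI v + indI u * indC v := by
  rcases u with a | b | c <;> rcases v with a' | b' | c'
  · have h : a = a' := Subsingleton.elim a a'
    subst h; simp [jm, ones, indC, indI, SimpleGraph.dist_self]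
  · rw [SimpleGraph.dist_eq_one_iff_adj.mpr (by trivial)]
    simp [jm, ones, indC, indI]
  · rw [SimpleGraph.dist_eq_one_iff_adj.mpr (by trivial)]
    simp [jm, ones, indC, indI]
  · rw [SimpleGraph.dist_eq_one_iff_adj.mpr (by trivial)]
    simp [jm, ones, indC, indI]
  · by_cases h : b = b'
    · subst h; simp [jm, ones, indC, indI, SimpleGraph.dist_self]
    · rw [SimpleGraph.dist_eq_one_iff_adj.mpr (by exact h : (G2 e m).Adj _ _)]
      simp [jm, ones, indC, indI, h]
  · rw [dist_eq_two_of (G2 e m) (by simp) (by rintro ⟨⟩) (k := Sum.inl 0) (by trivial) (by trivial)]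
    simp [jm, ones, indC, indI]
    norm_num
  · rw [SimpleGraph.dist_eq_one_iff_adj.mpr (by trivial)]
    simp [jm, ones, indC, indI]
  · rw [dist_eq_two_of (G2 e m) (by simp) (by rintro ⟨⟩) (k := Sum.inl 0) (by trivial) (by trivial)]
    simp [jm, ones, indC, indI]
    norm_num
  · by_cases h : c = c'
    · subst h; simp [jm, ones, indC, indI, SimpleGraph.dist_self]
    · rw [SimpleGraph.dist_eq_one_iff_adj.mpr (by exact h : (G2 e m).Adj _ _)]
      simp [jm, ones, indC, indI, h]

lemma D1_eq : distMatrix (G1 e m)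
    = Matrix.of (fun u v => ones u * ones v * jm u v) + Matrix.of (fun u v => indC u * indI v)
      + Matrix.of (fun u v => indI u * indC v) + Matrix.of (fun u v => indI u * indI v * jm u v) := by
  funext u v
  show ((G1 e m).dist u v : ℝ) = _
  rw [G1_dist]
  simp [Matrix.add_apply]

lemma D2_eq : distMatrix (G2 e m)
    = Matrix.of (fun u v => ones u * ones v * jm u v) + Matrix.of (fun u v => indC u * indI v)
      + Matrix.of (fun u v => indI u * indC v) := by
  funext u v
  show ((G2 e m).dist u v : ℝ) = _
  rw [G2_dist]
  simp [Matrix.add_apply]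

end DistLemmas

section QF
variable {V : Type*} [Fintype V] [DecidableEq V]

lemma mulVec_wJw (w x : V → ℝ) (u : V) :
    ((Matrix.of fun i j => w i * w j * jm i j).mulVec x) u
      = w u * ((∑ j, w j * x j) - w u * x u) := by
  show ∑ j, (w u * w j * jm u j) * x j = _
  have : ∀ j, (w u * w j * jm u j) * x j = w u * (w j * x j) - (if j = u then w u * (w j * x j) else 0) := by
    intro j
    by_cases h : u = j
    · subst h; simp [jm]
    · simp [jm, h, Ne.symm h]; ring
  rw [Finset.sum_congr rfl (fun j _ => this j), Finset.sum_sub_distrib, Finset.sum_ite_eq' Finset.univ u (fun j => w u * (w j * x j))]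
  simp only [Finset.mem_univ, if_true]
  rw [mul_sub, Finset.mul_sum]

lemma mulVec_prod (f g x : V → ℝ) (u : V) :
    ((Matrix.of fun i j => f i * g j).mulVec x) u = f u * (∑ j, g j * x j) := by
  show ∑ j, (f u * g j) * x j = _
  rw [Finset.mul_sum]
  exact Finset.sum_congr rfl (fun j _ => by ring)

lemma dot_wJw (w x : V → ℝ) :
    x ⬝ᵥ (Matrix.of fun i j => w i * w j * jm i j).mulVec x
      = (∑ j, w j * x j) ^ 2 - ∑ j, (w j * x j) ^ 2 := by
  show ∑ u, x u * ((Matrix.of fun i j => w i * w j * jm i j).mulVec x) u = _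
  rw [Finset.sum_congr rfl (fun u _ => by rw [mulVec_wJw w x u])]
  have : ∀ u, x u * (w u * ((∑ j, w j * x j) - w u * x u))
      = (w u * x u) * (∑ j, w j * x j) - (w u * x u)^2 := by intro u; ring
  rw [Finset.sum_congr rfl (fun u _ => this u), Finset.sum_sub_distrib, ← Finset.sum_mul]
  ring

lemma dot_prod (f g x : V → ℝ) :
    x ⬝ᵥ (Matrix.of fun i j => f i * g j).mulVec x
      = (∑ j, f j * x j) * (∑ j, g j * x j) := by
  show ∑ u, x u * ((Matrix.of fun i j => f i * g j).mulVec x) u = _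
  rw [Finset.sum_congr rfl (fun u _ => by rw [mulVec_prod f g x u])]
  rw [Finset.sum_congr rfl (fun u _ => by ring : ∀ u ∈ Finset.univ, x u * (f u * ∑ j, g j * x j) = (f u * x u) * ∑ j, g j * x j)]
  rw [← Finset.sum_mul]

end QF

def xv (e m : ℕ) (a b c : ℝ) : (Fin (e+1) ⊕ (Fin m ⊕ Fin (e+1))) → ℝ :=
  Sum.elim (fun _ => a) (Sum.elim (fun _ => b) (fun _ => c))

def yv (e m : ℕ) (a b c : ℝ) : (Fin 1 ⊕ (Fin (m+e) ⊕ Fin (e+1))) → ℝ :=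
  Sum.elim (fun _ => a) (Sum.elim (fun k => if (k : ℕ) < e then a else b) (fun _ => c))

lemma sum_fin_split (e m : ℕ) (p q : ℝ) :
    ∑ k : Fin (m+e), (if (k : ℕ) < e then p else q) = e * p + m * q := by
  rw [Fin.sum_univ_eq_sum_range (fun i => if i < e then p else q) (m+e)]
  have hme : m + e = e + m := Nat.add_comm m e
  rw [hme, Finset.range_eq_Ico, ← Finset.sum_Ico_consecutive _ (Nat.zero_le e) (Nat.le_add_right e m)]
  have h1 : ∑ i ∈ Finset.Ico 0 e, (if i < e then p else q) = e * p := by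
    rw [Finset.sum_congr rfl (fun i hi => by
      rw [if_pos]; exact (Finset.mem_Ico.mp hi).2)]
    simp [Finset.sum_const, Nat.card_Ico]
  have h2 : ∑ i ∈ Finset.Ico e (e+m), (if i < e then p else q) = m * q := by
    rw [Finset.sum_congr rfl (fun i hi => by
      rw [if_neg]; exact Nat.not_lt.mpr (Finset.mem_Ico.mp hi).1)]
    simp [Finset.sum_const, Nat.card_Ico]
  rw [h1, h2]

section Sums
variable (e m : ℕ) (a b c : ℝ)

lemma sum_xv : ∑ u, xv e m a b c u = (e+1 : ℝ) * a + m * b + (e+1 : ℝ) * c := by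
  simp [xv, Fintype.sum_sum_type, Finset.sum_const, Fintype.card_fin, nsmul_eq_mul]
  push_cast; ring

lemma sum_xv_sq : ∑ u, (xv e m a b c u)^2 = (e+1 : ℝ) * a^2 + m * b^2 + (e+1 : ℝ) * c^2 := by
  simp [xv, Fintype.sum_sum_type, Finset.sum_const, Fintype.card_fin, nsmul_eq_mul]
  push_cast; ring

lemma sum_indC_xv : ∑ u, indC u * xv e m a b c u = m * b := by
  simp [xv, indC, Fintype.sum_sum_type, Finset.sum_const, Fintype.card_fin, nsmul_eq_mul]

lemma sum_indI_xv : ∑ u, indI u * xv e m a b c u = (e+1 : ℝ) * c := by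
  simp [xv, indI, Fintype.sum_sum_type, Finset.sum_const, Fintype.card_fin, nsmul_eq_mul]

lemma sum_indI_xv_sq : ∑ u, (indI u * xv e m a b c u)^2 = (e+1 : ℝ) * c^2 := by
  simp [xv, indI, Fintype.sum_sum_type, Finset.sum_const, Fintype.card_fin, nsmul_eq_mul]

lemma sum_yv : ∑ u, yv e m a b c u = a + ((e:ℝ) * a + m * b) + (e+1 : ℝ) * c := by
  simp only [yv, Fintype.sum_sum_type, Sum.elim_inl, Sum.elim_inr]
  rw [sum_fin_split]
  simp [Finset.sum_const, Fintype.card_fin, nsmul_eq_mul]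
  push_cast; ring

lemma sum_yv_sq : ∑ u, (yv e m a b c u)^2 = a^2 + ((e:ℝ) * a^2 + m * b^2) + (e+1 : ℝ) * c^2 := by
  simp only [yv, Fintype.sum_sum_type, Sum.elim_inl, Sum.elim_inr]
  have : ∀ k : Fin (m+e), (if (k : ℕ) < e then a else b)^2 = (if (k : ℕ) < e then a^2 else b^2) := by
    intro k; split_ifs <;> rfl
  rw [Finset.sum_congr rfl (fun k _ => this k), sum_fin_split]
  simp [Finset.sum_const, Fintype.card_fin, nsmul_eq_mul]
  push_cast; ring

lemma sum_indC_yv : ∑ u, indC u * yv e m a b c u = (e:ℝ) * a + m * b := by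
  simp only [yv, indC, Fintype.sum_sum_type, Sum.elim_inl, Sum.elim_inr, one_mul, zero_mul]
  rw [sum_fin_split]
  simp

lemma sum_indI_yv : ∑ u, indI u * yv e m a b c u = (e+1 : ℝ) * c := by
  simp [yv, indI, Fintype.sum_sum_type, Finset.sum_const, Fintype.card_fin, nsmul_eq_mul]

end Sums



lemma eigen_le_of_posvec {V : Type*} [Fintype V] [Nonempty V]
    (A : Matrix V V ℝ) (hA : ∀ i j, 0 ≤ A i j) (x : V → ℝ) (hx : ∀ i, 0 < x i)
    (r : ℝ) (hAx : ∀ i, (A.mulVec x) i ≤ r * x i)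
    (ν : ℝ) (v : V → ℝ) (hv : v ≠ 0) (hev : A.mulVec v = ν • v) : ν ≤ r := by
  obtain ⟨i0, -, hmax⟩ := Finset.exists_max_image Finset.univ (fun i => |v i| / x i)
    ⟨Classical.arbitrary V, Finset.mem_univ _⟩
  set c := |v i0| / x i0 with hc
  have hbound : ∀ j, |v j| ≤ c * x j := by
    intro j
    have h1 := hmax j (Finset.mem_univ j)
    have := (div_le_iff₀ (hx j)).mp h1
    linarith [this]
  have hcpos : 0 < c := by
    obtain ⟨j, hj⟩ : ∃ j, v j ≠ 0 := Function.ne_iff.mp hv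
    have h1 := hmax j (Finset.mem_univ j)
    have : 0 < |v j| / x j := div_pos (abs_pos.mpr hj) (hx j)
    linarith
  have hvi0 : |v i0| = c * x i0 := by
    rw [hc, div_mul_cancel₀ _ (ne_of_gt (hx i0))]
  have key : |ν| * |v i0| ≤ r * |v i0| := by
    have h0 : |ν * v i0| = |(A.mulVec v) i0| := by rw [hev]; simp [abs_mul]
    calc |ν| * |v i0| = |ν * v i0| := (abs_mul ν (v i0)).symm
      _ = |∑ j, A i0 j * v j| := by rw [h0]; rfl
      _ ≤ ∑ j, |A i0 j * v j| := Finset.abs_sum_le_sum_abs _ _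
      _ ≤ ∑ j, A i0 j * (c * x j) := by
          apply Finset.sum_le_sum
          intro j _
          rw [abs_mul, abs_of_nonneg (hA i0 j)]
          exact mul_le_mul_of_nonneg_left (hbound j) (hA i0 j)
      _ = c * (A.mulVec x) i0 := by
          show _ = c * ∑ j, A i0 j * x j
          rw [Finset.mul_sum]; apply Finset.sum_congr rfl; intro j _; ring
      _ ≤ c * (r * x i0) := by
          apply mul_le_mul_of_nonneg_left (hAx i0) (le_of_lt hcpos)
      _ = r * (c * x i0) := by ring
      _ = r * |v i0| := by rw [hvi0]
  have hvi0pos : 0 < |v i0| := by rw [hvi0]; exact mul_pos hcpos (hx i0)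
  have : |ν| ≤ r := le_of_mul_le_mul_right (by linarith [key]) hvi0pos
  linarith [le_abs_self ν, this]


lemma exists_eigen_nonneg_in_submodule {V : Type*} [Fintype V] [DecidableEq V] [Nonempty V]
    (A : Matrix V V ℝ) (hher : A.IsHermitian) (hnn : ∀ i j, 0 ≤ A i j)
    (S : Submodule ℝ (EuclideanSpace ℝ V))
    (hinv : ∀ w ∈ S, Matrix.toEuclideanLin A w ∈ S)
    (habs : ∀ w ∈ S, (WithLp.toLp 2 (fun i => |w i|) : EuclideanSpace ℝ V) ∈ S)
    (w0 : EuclideanSpace ℝ V) (hw0 : w0 ∈ S) (hw0ne : w0 ≠ 0) :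
    ∃ (μ : ℝ) (w : EuclideanSpace ℝ V), w ∈ S ∧ w ≠ 0 ∧ (∀ i, 0 ≤ w i) ∧
      A.mulVec w = μ • w := by
  haveI : Nontrivial ↥S := ⟨⟨⟨w0, hw0⟩, 0, by simp [hw0ne]⟩⟩
  haveI := FiniteDimensional.proper_rclike ℝ ↥S
  have hsymm : (Matrix.toEuclideanLin A).IsSymmetric :=
    Matrix.isHermitian_iff_isSymmetric.mp hher
  set T : ↥S →ₗ[ℝ] ↥S := (Matrix.toEuclideanLin A).restrict hinv with hT
  have hTsym : T.IsSymmetric := by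
    intro u v
    have := hsymm (u : EuclideanSpace ℝ V) (v : EuclideanSpace ℝ V)
    simpa [hT, LinearMap.restrict_coe_apply, Submodule.coe_inner] using this
  set Tc : ↥S →L[ℝ] ↥S := LinearMap.toContinuousLinearMap T with hTc
  have hTcsa : IsSelfAdjoint Tc := by
    rw [ContinuousLinearMap.isSelfAdjoint_iff_isSymmetric]
    intro u v
    exact hTsym u v
  -- maximizer on unit sphere
  have H1 : IsCompact (Metric.sphere (0 : ↥S) 1) := isCompact_sphere _ _
  have H2 : (Metric.sphere (0 : ↥S) 1).Nonempty := NormedSpace.sphere_nonempty.mpr zero_le_one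
  obtain ⟨x₀, hx₀mem, hx₀max⟩ :=
    H1.exists_isMaxOn H2 Tc.reApplyInnerSelf_continuous.continuousOn
  have hx₀norm : ‖x₀‖ = 1 := by simpa using hx₀mem
  -- the absolute-value vector
  set u : EuclideanSpace ℝ V := (x₀ : EuclideanSpace ℝ V) with hu
  set w : EuclideanSpace ℝ V := (WithLp.toLp 2 (fun i => |u i|) : EuclideanSpace ℝ V) with hw
  have hwS : w ∈ S := habs u x₀.2
  set w₁ : ↥S := ⟨w, hwS⟩ with hw₁
  have hnormw : ‖w₁‖ = ‖x₀‖ := by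
    show ‖w‖ = ‖u‖
    rw [EuclideanSpace.norm_eq, EuclideanSpace.norm_eq]
    congr 1
    apply Finset.sum_congr rfl
    intro i _
    simp [hw, Real.norm_eq_abs, abs_abs, sq_abs]
  have hw₁ne : w₁ ≠ 0 := by
    intro h
    rw [h] at hnormw
    simp [hx₀norm] at hnormw
  -- inner products as sums
  have hinner : ∀ z : ↥S, Tc.reApplyInnerSelf z =
      ∑ i, (∑ j, A i j * (z : EuclideanSpace ℝ V) j) * (z : EuclideanSpace ℝ V) i := by
    intro z
    rw [ContinuousLinearMap.reApplyInnerSelf_apply]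
    have h1 : ((Tc z : ↥S) : EuclideanSpace ℝ V) = Matrix.toEuclideanLin A (z : EuclideanSpace ℝ V) := by
      simp [hTc, hT, LinearMap.restrict_coe_apply]
    have h2 : (inner ℝ (Tc z) z : ℝ) = inner ℝ (Matrix.toEuclideanLin A (z : EuclideanSpace ℝ V)) ((z : EuclideanSpace ℝ V)) := by
      rw [← h1]; rfl
    rw [h2]
    rw [PiLp.inner_apply]
    simp only [RCLike.inner_apply, conj_trivial, RCLike.re_to_real]
    exact Finset.sum_congr rfl (fun i _ => mul_comm _ _)
  -- w₁ is also a maximizer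
  have hmaxw : IsMaxOn Tc.reApplyInnerSelf (Metric.sphere (0 : ↥S) ‖w₁‖) w₁ := by
    rw [hnormw, hx₀norm]
    intro z hz
    have h1 : Tc.reApplyInnerSelf z ≤ Tc.reApplyInnerSelf x₀ := hx₀max hz
    have h2 : Tc.reApplyInnerSelf x₀ ≤ Tc.reApplyInnerSelf w₁ := by
      rw [hinner, hinner]
      apply Finset.sum_le_sum
      intro i _
      show (∑ j, A i j * u j) * u i ≤ (∑ j, A i j * |u j|) * |u i|
      calc (∑ j, A i j * u j) * u i ≤ |(∑ j, A i j * u j) * u i| := le_abs_self _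
        _ = |∑ j, A i j * u j| * |u i| := abs_mul _ _
        _ ≤ (∑ j, A i j * |u j|) * |u i| := by
            apply mul_le_mul_of_nonneg_right ?_ (abs_nonneg _)
            calc |∑ j, A i j * u j| ≤ ∑ j, |A i j * u j| := Finset.abs_sum_le_sum_abs _ _
              _ = ∑ j, A i j * |u j| := by
                  apply Finset.sum_congr rfl; intro j _
                  rw [abs_mul, abs_of_nonneg (hnn i j)]
    exact le_trans h1 h2
  have hev := hTcsa.hasEigenvector_of_isMaxOn hw₁ne hmaxw
  set μ : ℝ := ⨆ x : { x : ↥S // x ≠ 0 }, Tc.rayleighQuotient x with hμ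
  have heig : T w₁ = μ • w₁ := by
    have := hev.1
    rw [Module.End.mem_eigenspace_iff] at this
    exact this
  refine ⟨μ, w, hwS, ?_, fun i => abs_nonneg _, ?_⟩
  · intro h
    apply hw₁ne
    exact Subtype.ext h
  · have := congrArg (Subtype.val) heig
    rw [LinearMap.restrict_coe_apply] at this
    exact congrArg WithLp.ofLp this


lemma exists_top_eigen_ge_rayleigh {V : Type*} [Fintype V] [DecidableEq V] [Nonempty V]
    (A : Matrix V V ℝ) (hher : A.IsHermitian) (y : V → ℝ) (hy : y ≠ 0) :
    ∃ (μ : ℝ) (v : V → ℝ), v ≠ 0 ∧ A.mulVec v = μ • v ∧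
      y ⬝ᵥ A.mulVec y ≤ μ * (y ⬝ᵥ y) := by
  haveI : Nontrivial (EuclideanSpace ℝ V) := by
    refine ⟨(WithLp.toLp 2 y : EuclideanSpace ℝ V), 0, ?_⟩
    intro h; exact hy (by simpa using congrArg WithLp.ofLp h)
  set E := EuclideanSpace ℝ V
  set ye : E := (WithLp.toLp 2 y : E) with hye
  have hyne : ye ≠ 0 := fun h => hy (by simpa [hye] using congrArg WithLp.ofLp h)
  have hynorm : 0 < ‖ye‖ := norm_pos_iff.mpr hyne
  have hsymm : (Matrix.toEuclideanLin A).IsSymmetric :=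
    Matrix.isHermitian_iff_isSymmetric.mp hher
  set Tc : E →L[ℝ] E := LinearMap.toContinuousLinearMap (Matrix.toEuclideanLin A) with hTc
  have hTcsa : IsSelfAdjoint Tc := by
    rw [ContinuousLinearMap.isSelfAdjoint_iff_isSymmetric]
    intro u v
    exact hsymm u v
  have H1 : IsCompact (Metric.sphere (0 : E) ‖ye‖) := isCompact_sphere _ _
  have H2 : (Metric.sphere (0 : E) ‖ye‖).Nonempty := ⟨ye, by simp⟩
  obtain ⟨x₀, hx₀mem, hx₀max⟩ :=
    H1.exists_isMaxOn H2 Tc.reApplyInnerSelf_continuous.continuousOn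
  have hx₀norm : ‖x₀‖ = ‖ye‖ := by simpa using hx₀mem
  have hx₀ne : x₀ ≠ 0 := by
    intro h
    rw [h] at hx₀norm
    simp at hx₀norm
    exact hynorm.ne' hx₀norm.symm
  have hmax' : IsMaxOn Tc.reApplyInnerSelf (Metric.sphere (0 : E) ‖x₀‖) x₀ := by
    rwa [hx₀norm]
  have hev := hTcsa.hasEigenvector_of_isMaxOn hx₀ne hmax'
  set μ : ℝ := ⨆ x : { x : E // x ≠ 0 }, Tc.rayleighQuotient x with hμ
  have heig : Matrix.toEuclideanLin A x₀ = μ • x₀ := by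
    have := hev.1
    rw [Module.End.mem_eigenspace_iff] at this
    exact this
  have hinner : ∀ z : E, Tc.reApplyInnerSelf z = z ⬝ᵥ A.mulVec z := by
    intro z
    rw [ContinuousLinearMap.reApplyInnerSelf_apply]
    have h2 : (inner ℝ (Tc z) z : ℝ) = inner ℝ (Matrix.toEuclideanLin A z) z := rfl
    rw [h2, PiLp.inner_apply]
    simp only [RCLike.inner_apply, conj_trivial]
    rfl
  have hx₀val : Tc.reApplyInnerSelf x₀ = μ * ‖ye‖ ^ 2 := by
    rw [ContinuousLinearMap.reApplyInnerSelf_apply]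
    have : (inner ℝ (Tc x₀) x₀ : ℝ) = inner ℝ (μ • x₀) x₀ := by
      rw [show (Tc x₀ : E) = Matrix.toEuclideanLin A x₀ from rfl, heig]
    rw [this, real_inner_smul_left, real_inner_self_eq_norm_sq, hx₀norm]; rfl
  have hyval : Tc.reApplyInnerSelf ye = y ⬝ᵥ A.mulVec y := hinner ye
  have hchain : y ⬝ᵥ A.mulVec y ≤ μ * ‖ye‖ ^ 2 := by
    rw [← hyval, ← hx₀val]
    exact hx₀max (by simp)
  refine ⟨μ, x₀.ofLp, fun h => hx₀ne (by simpa using congrArg (WithLp.toLp 2) h), congrArg WithLp.ofLp heig, ?_⟩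
  have hnorm2 : ‖ye‖ ^ 2 = y ⬝ᵥ y := by
    rw [← real_inner_self_eq_norm_sq, PiLp.inner_apply]
    simp only [RCLike.inner_apply, conj_trivial]
    rfl
  rwa [hnorm2] at hchain

lemma mulVec_xv (e m : ℕ) (a b c : ℝ) :
    (distMatrix (G1 e m)).mulVec (xv e m a b c)
      = xv e m ((e:ℝ)*a + m*b + ((e:ℝ)+1)*c)
          (((e:ℝ)+1)*a + (m*b - b) + 2*((e:ℝ)+1)*c)
          (((e:ℝ)+1)*a + 2*((m:ℝ)*b) + 2*(e:ℝ)*c) := by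
  rw [D1_eq]
  funext u
  rw [Matrix.add_mulVec, Matrix.add_mulVec, Matrix.add_mulVec]
  simp only [Pi.add_apply]
  rw [mulVec_wJw, mulVec_prod, mulVec_prod, mulVec_wJw]
  have h1 : ∑ j, ones j * xv e m a b c j = ((e:ℝ)+1)*a + m*b + ((e:ℝ)+1)*c := by
    simp only [ones, one_mul]
    rw [sum_xv]
  have h2 : ∑ j, indI j * xv e m a b c j = ((e:ℝ)+1)*c := by
    rw [sum_indI_xv]
  have h3 : ∑ j, indC j * xv e m a b c j = (m:ℝ)*b := sum_indC_xv e m a b c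
  rw [h1, h2, h3]
  rcases u with i | i | i <;>
    simp only [xv, indC, indI, ones, Sum.elim_inl, Sum.elim_inr] <;> ring

set_option maxHeartbeats 2000000 in
theorem key_lemma (e m : ℕ) (he : 1 ≤ e) (hm : 1 ≤ m) :
    distSpecRad (G1 e m) < distSpecRad (G2 e m) := by
  have hE : (1:ℝ) ≤ (e:ℝ) := by exact_mod_cast he
  have hM : (1:ℝ) ≤ (m:ℝ) := by exact_mod_cast hm
  set A1 := distMatrix (G1 e m) with hA1def
  set A2 := distMatrix (G2 e m) with hA2def
  have hA1nn : ∀ i j, 0 ≤ A1 i j := fun i j => Nat.cast_nonneg _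
  have hA2nn : ∀ i j, 0 ≤ A2 i j := fun i j => Nat.cast_nonneg _
  have hA1herm : A1.IsHermitian := by
    rw [Matrix.IsHermitian]
    funext i j
    show star (A1 j i) = A1 i j
    rw [star_trivial]
    show ((G1 e m).dist j i : ℝ) = ((G1 e m).dist i j : ℝ)
    rw [SimpleGraph.dist_comm]
  have hA2herm : A2.IsHermitian := by
    rw [Matrix.IsHermitian]
    funext i j
    show star (A2 j i) = A2 i j
    rw [star_trivial]
    show ((G2 e m).dist j i : ℝ) = ((G2 e m).dist i j : ℝ)
    rw [SimpleGraph.dist_comm]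
  -- the submodule of classwise-constant vectors
  set S : Submodule ℝ (EuclideanSpace ℝ (T1 e m)) :=
    { carrier := {x | ∃ a b c : ℝ, x = WithLp.toLp 2 (xv e m a b c)}
      add_mem' := by
        rintro x y ⟨a, b, c, rfl⟩ ⟨a', b', c', rfl⟩
        refine ⟨a + a', b + b', c + c', ?_⟩
        ext u; rcases u with i | i | i <;> simp [xv]
      zero_mem' := ⟨0, 0, 0, by ext u; rcases u with i | i | i <;> simp [xv]⟩
      smul_mem' := by
        rintro r x ⟨a, b, c, rfl⟩
        refine ⟨r * a, r * b, r * c, ?_⟩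
        ext u; rcases u with i | i | i <;> simp [xv] } with hSdef
  have hinv : ∀ w ∈ S, Matrix.toEuclideanLin A1 w ∈ S := by
    rintro w ⟨a, b, c, rfl⟩
    have : Matrix.toEuclideanLin A1 (WithLp.toLp 2 (xv e m a b c)) = WithLp.toLp 2 (A1.mulVec (xv e m a b c)) := rfl
    rw [this, hA1def, mulVec_xv]
    exact ⟨_, _, _, rfl⟩
  have habs : ∀ w ∈ S, (WithLp.toLp 2 (fun i => |w i|) : EuclideanSpace ℝ (T1 e m)) ∈ S := by
    rintro w ⟨a, b, c, rfl⟩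
    refine ⟨|a|, |b|, |c|, ?_⟩
    ext u; rcases u with i | i | i <;> simp [xv]
  have hw0 : (WithLp.toLp 2 (xv e m 1 1 1) : EuclideanSpace ℝ (T1 e m)) ∈ S := ⟨1, 1, 1, rfl⟩
  have hw0ne : (WithLp.toLp 2 (xv e m 1 1 1) : EuclideanSpace ℝ (T1 e m)) ≠ 0 := by
    intro h
    have := congrFun (congrArg WithLp.ofLp h) (Sum.inl 0)
    simp [xv] at this
  obtain ⟨μ, w, hwS, hwne, hwnn, heig⟩ :=
    exists_eigen_nonneg_in_submodule A1 hA1herm hA1nn S hinv habs _ hw0 hw0ne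
  obtain ⟨A, B, C, rfl⟩ := hwS
  have hAnn : 0 ≤ A := hwnn (Sum.inl 0)
  have hBnn : 0 ≤ B := hwnn (Sum.inr (Sum.inl ⟨0, hm⟩))
  have hCnn : 0 ≤ C := hwnn (Sum.inr (Sum.inr 0))
  -- the three eigen-equations
  rw [WithLp.ofLp_toLp, hA1def, mulVec_xv] at heig
  have eq1 : (e:ℝ)*A + m*B + ((e:ℝ)+1)*C = μ * A := by
    have := congrFun heig (Sum.inl 0)
    simpa [xv] using this
  have eq2 : ((e:ℝ)+1)*A + ((m:ℝ)*B - B) + 2*((e:ℝ)+1)*C = μ * B := by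
    have := congrFun heig (Sum.inr (Sum.inl ⟨0, hm⟩))
    simpa [xv] using this
  have eq3 : ((e:ℝ)+1)*A + 2*((m:ℝ)*B) + 2*(e:ℝ)*C = μ * C := by
    have := congrFun heig (Sum.inr (Sum.inr 0))
    simpa [xv] using this
  have hsumpos : 0 < A + B + C := by
    rcases lt_or_eq_of_le hAnn with h | h
    · linarith
    rcases lt_or_eq_of_le hBnn with h' | h'
    · linarith
    rcases lt_or_eq_of_le hCnn with h'' | h''
    · linarith
    exfalso
    apply hwne
    ext u; rcases u with i | i | i <;> simp [xv, ← h, ← h', ← h'']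
  have hμ1 : 1 ≤ μ := by nlinarith [eq1, eq2, eq3]
  have hApos : 0 < A := by
    rcases lt_or_eq_of_le hAnn with h | h
    · exact h
    exfalso; nlinarith [eq1, eq2, eq3]
  have hBpos : 0 < B := by
    rcases lt_or_eq_of_le hBnn with h | h
    · exact h
    exfalso; nlinarith [eq1, eq2, eq3]
  have hCpos : 0 < C := by
    rcases lt_or_eq_of_le hCnn with h | h
    · exact h
    exfalso; nlinarith [eq1, eq2, eq3]
  have h2AC : C < 2 * A := by nlinarith [eq1, eq3]
  -- upper bound for G1
  have hub : distSpecRad (G1 e m) ≤ μ := by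
    apply Real.sSup_le
    · rintro ν ⟨v, hvne, hvev⟩
      refine eigen_le_of_posvec A1 hA1nn (xv e m A B C) ?_ μ ?_ ν v hvne hvev
      · intro i; rcases i with i | i | i <;> simp [xv] <;> assumption
      · intro i
        rw [hA1def, mulVec_xv]
        rw [heig]
        exact le_of_eq rfl
    · linarith
  -- lower bound for G2
  set y : T2 e m → ℝ := yv e m A B C with hydef
  have hyne : y ≠ 0 := by
    intro h
    have := congrFun h (Sum.inl 0)
    simp [hydef, yv] at this
    exact hApos.ne' this
  obtain ⟨μ2, v2, hv2ne, hv2ev, hray⟩ := exists_top_eigen_ge_rayleigh A2 hA2herm y hyne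
  have hmem : μ2 ∈ {ν : ℝ | ∃ v : T2 e m → ℝ, v ≠ 0 ∧ A2.mulVec v = ν • v} := ⟨v2, hv2ne, hv2ev⟩
  have hbdd : BddAbove {ν : ℝ | ∃ v : T2 e m → ℝ, v ≠ 0 ∧ A2.mulVec v = ν • v} := by
    refine ⟨3 * Fintype.card (T2 e m), ?_⟩
    rintro ν ⟨v, hvne, hvev⟩
    refine eigen_le_of_posvec A2 hA2nn (fun _ => 1) (fun _ => one_pos) _ ?_ ν v hvne hvev
    intro i
    show ∑ j, A2 i j * 1 ≤ _
    have hC01 : ∀ u : T2 e m, 0 ≤ indC u ∧ indC u ≤ 1 := by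
      rintro (p | p | p) <;> simp [indC]
    have hI01 : ∀ u : T2 e m, 0 ≤ indI u ∧ indI u ≤ 1 := by
      rintro (p | p | p) <;> simp [indI]
    have hentry : ∀ j, A2 i j ≤ 3 := by
      intro j
      show ((G2 e m).dist i j : ℝ) ≤ 3
      rw [G2_dist]
      have hjm : jm i j ≤ 1 := by unfold jm; split_ifs <;> norm_num
      have h1 : indC i * indI j ≤ 1 := mul_le_one₀ (hC01 i).2 (hI01 j).1 (hI01 j).2
      have h2 : indI i * indC j ≤ 1 := mul_le_one₀ (hI01 i).2 (hC01 j).1 (hC01 j).2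
      simp only [ones, one_mul]
      linarith
    calc ∑ j, A2 i j * 1 ≤ ∑ _j : T2 e m, 3 := by
          apply Finset.sum_le_sum; intro j _; rw [mul_one]; exact hentry j
      _ = 3 * Fintype.card (T2 e m) := by
          rw [Finset.sum_const, Finset.card_univ, nsmul_eq_mul]; ring
      _ ≤ 3 * Fintype.card (T2 e m) * 1 := by
          have : (0:ℝ) ≤ 3 * Fintype.card (T2 e m) := by positivity
          linarith
  have hlb : μ2 ≤ distSpecRad (G2 e m) := le_csSup hbdd hmem
  -- the strict comparison μ < μ2
  set x : T1 e m → ℝ := xv e m A B C with hxdef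
  have hN : y ⬝ᵥ y = x ⬝ᵥ x := by
    show ∑ u, y u * y u = ∑ u, x u * x u
    have h1 : ∑ u, y u * y u = ∑ u, (y u)^2 := by
      apply Finset.sum_congr rfl; intro u _; ring
    have h2 : ∑ u, x u * x u = ∑ u, (x u)^2 := by
      apply Finset.sum_congr rfl; intro u _; ring
    rw [h1, h2, hydef, hxdef, sum_yv_sq, sum_xv_sq]
    ring
  have hNpos : 0 < x ⬝ᵥ x := by
    show 0 < ∑ u, x u * x u
    have h2 : ∑ u, x u * x u = ∑ u, (x u)^2 := by
      apply Finset.sum_congr rfl; intro u _; ring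
    rw [h2, hxdef, sum_xv_sq]
    nlinarith
  have hQ1 : x ⬝ᵥ A1.mulVec x = μ * (x ⬝ᵥ x) := by
    rw [hxdef, hA1def, mulVec_xv, heig]
    show xv e m A B C ⬝ᵥ (μ • xv e m A B C) = _
    rw [dotProduct_smul]
    rfl
  -- expand both quadratic forms
  have hQ1' : x ⬝ᵥ A1.mulVec x
      = (((e:ℝ)+1)*A + m*B + ((e:ℝ)+1)*C)^2 - (((e:ℝ)+1)*A^2 + m*B^2 + ((e:ℝ)+1)*C^2)
        + ((m:ℝ)*B) * (((e:ℝ)+1)*C) + (((e:ℝ)+1)*C) * ((m:ℝ)*B)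
        + ((((e:ℝ)+1)*C)^2 - ((e:ℝ)+1)*C^2) := by
    rw [hxdef, hA1def, D1_eq]
    rw [Matrix.add_mulVec, Matrix.add_mulVec, Matrix.add_mulVec]
    rw [dotProduct_add, dotProduct_add, dotProduct_add]
    rw [dot_wJw, dot_prod, dot_prod, dot_wJw]
    have hones : ∀ a b c : ℝ, ∑ j, ones j * xv e m a b c j = ((e:ℝ)+1)*a + m*b + ((e:ℝ)+1)*c := by
      intro a b c
      simp only [ones, one_mul]
      rw [sum_xv]
    have honessq : ∑ j, (ones j * xv e m A B C j)^2 = ((e:ℝ)+1)*A^2 + m*B^2 + ((e:ℝ)+1)*C^2 := by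
      simp only [ones, one_mul]
      rw [sum_xv_sq]
    have hindIsq : ∑ j, (indI j * xv e m A B C j)^2 = ((e:ℝ)+1)*C^2 := by
      rw [sum_indI_xv_sq]
    have hindI : ∑ j, indI j * xv e m A B C j = ((e:ℝ)+1)*C := by
      rw [sum_indI_xv]
    rw [hones, honessq, hindIsq, hindI, sum_indC_xv]
  have hQ2 : y ⬝ᵥ A2.mulVec y
      = (A + ((e:ℝ)*A + m*B) + ((e:ℝ)+1)*C)^2 - (A^2 + ((e:ℝ)*A^2 + m*B^2) + ((e:ℝ)+1)*C^2)
        + ((e:ℝ)*A + (m:ℝ)*B) * (((e:ℝ)+1)*C) + (((e:ℝ)+1)*C) * ((e:ℝ)*A + (m:ℝ)*B) := by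
    rw [hydef, hA2def, D2_eq]
    rw [Matrix.add_mulVec, Matrix.add_mulVec]
    rw [dotProduct_add, dotProduct_add]
    rw [dot_wJw, dot_prod, dot_prod]
    have hones : ∑ j, ones j * yv e m A B C j = A + ((e:ℝ)*A + m*B) + ((e:ℝ)+1)*C := by
      simp only [ones, one_mul]
      rw [sum_yv]
    have honessq : ∑ j, (ones j * yv e m A B C j)^2 = A^2 + ((e:ℝ)*A^2 + m*B^2) + ((e:ℝ)+1)*C^2 := by
      simp only [ones, one_mul]
      rw [sum_yv_sq]
    have hindI : ∑ j, indI j * yv e m A B C j = ((e:ℝ)+1)*C := by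
      rw [sum_indI_yv]
    rw [hones, honessq, hindI, sum_indC_yv]
  have hdiff : y ⬝ᵥ A2.mulVec y - μ * (x ⬝ᵥ x) = (e:ℝ)*((e:ℝ)+1)*C*(2*A - C) := by
    rw [← hQ1, hQ1', hQ2]
    ring
  have hstrict : μ * (x ⬝ᵥ x) < y ⬝ᵥ A2.mulVec y := by
    have h1 : 0 < (e:ℝ) := by linarith
    have h2 : 0 < (e:ℝ)+1 := by linarith
    have h3 : 0 < 2*A - C := by linarith
    have hpos : 0 < (e:ℝ)*((e:ℝ)+1)*C*(2*A - C) :=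
      mul_pos (mul_pos (mul_pos h1 h2) hCpos) h3
    linarith [hdiff]
  have hμlt : μ < μ2 := by
    rw [hN] at hray
    have h := lt_of_lt_of_le hstrict hray
    exact (mul_lt_mul_iff_left₀ hNpos).mp h
  calc distSpecRad (G1 e m) ≤ μ := hub
    _ < μ2 := hμlt
    _ ≤ distSpecRad (G2 e m) := hlb

end Aux

theorem stmt10 (δ n : ℕ) (hδ : 2 ≤ δ) (hn : 2 * δ + 1 ≤ n) :
    distSpecRad (graphJoin (⊤ : SimpleGraph (Fin δ))
        (graphSum (⊤ : SimpleGraph (Fin (n - 2 * δ))) (⊥ : SimpleGraph (Fin δ))))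
      < distSpecRad (graphJoin (⊤ : SimpleGraph (Fin 1))
        (graphSum (⊤ : SimpleGraph (Fin (n - δ - 1))) (⊤ : SimpleGraph (Fin δ)))) := by
  obtain ⟨e, rfl⟩ : ∃ e, δ = e + 1 := ⟨δ - 1, by omega⟩
  set m := n - 2 * (e + 1) with hm0
  rw [show n - (e + 1) - 1 = m + e by omega]
  exact key_lemma e m (by omega) (by omega)
end
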